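/- arXiv:2305.08679 — 5 statements merged into one kernel-verified Lean document; each statement's English description precedes it below -/
import Mathlib

section
/- For 1 < p < ∞ and every nonnegative integrable function f on (0,∞), the Hardy operator H f(x) = (1/x) ∫₀ˣ f(t) dt satisfies ‖H f‖_{L^p(0,∞)} ≤ (p/(p-1)) ‖f‖_{L^p(0,∞)}. -/
open MeasureTheory Set
open scoped ENNReal

namespace HardyAux

/-- `∫⁻ t in (0,x), t^r = x^(r+1)/(r+1)` for `-1 < r`, `0 < x`, as an `ℝ≥0∞` integral. -/
lemma lintegral_Ioo_rpow {r : ℝ} (hr : -1 < r) {x : ℝ} (hx : 0 < x) :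
    ∫⁻ t in Ioo (0:ℝ) x, ENNReal.ofReal (t ^ r) = ENNReal.ofReal (x ^ (r + 1) / (r + 1)) := by
  have hint : IntegrableOn (fun t : ℝ => t ^ r) (Ioo 0 x) := by
    have h := (intervalIntegrable_iff.mp (intervalIntegral.intervalIntegrable_rpow' hr (a := 0) (b := x)))
    rw [uIoc_of_le hx.le] at h
    exact h.mono_set Ioo_subset_Ioc_self
  rw [← ofReal_integral_eq_lintegral_ofReal hint]
  · congr 1
    have h1 : ∫ t in Ioo (0:ℝ) x, t ^ r = ∫ t in (0:ℝ)..x, t ^ r := by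
      rw [intervalIntegral.integral_of_le hx.le, integral_Ioc_eq_integral_Ioo]
    rw [h1, integral_rpow (Or.inl hr), Real.zero_rpow (by linarith : r + 1 ≠ 0), sub_zero]
  · filter_upwards [ae_restrict_mem measurableSet_Ioo] with t ht
    exact Real.rpow_nonneg ht.1.le r

/-- `∫⁻ x in (t,∞), x^a = -t^(a+1)/(a+1)` for `a < -1`, `0 < t`. -/
lemma lintegral_Ioi_rpow {a : ℝ} (ha : a < -1) {t : ℝ} (ht : 0 < t) :
    ∫⁻ x in Ioi t, ENNReal.ofReal (x ^ a) = ENNReal.ofReal (-t ^ (a + 1) / (a + 1)) := by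
  rw [← ofReal_integral_eq_lintegral_ofReal (integrableOn_Ioi_rpow_of_lt ha ht)]
  · rw [integral_Ioi_rpow_of_lt ha ht]
  · filter_upwards [ae_restrict_mem measurableSet_Ioi] with x hx
    exact Real.rpow_nonneg (ht.trans hx).le a

lemma swap_step {p q : ℝ} (hpq : Real.HolderConjugate p q) {W : ℝ → ℝ≥0∞}
    (hWm : Measurable W) :
    ∫⁻ x in Ioi (0:ℝ), ENNReal.ofReal (x ^ (1/p - 2)) *
        ∫⁻ t in Ioo (0:ℝ) x, W t * ENNReal.ofReal (t ^ (1/q)) =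
      ENNReal.ofReal q * ∫⁻ t in Ioi (0:ℝ), W t := by
  have hp0 : 0 < p := hpq.pos
  have hq0 : 0 < q := hpq.symm.pos
  set S : Set (ℝ × ℝ) := {z : ℝ × ℝ | 0 < z.2 ∧ z.2 < z.1} with hS
  have hSm : MeasurableSet S := by
    exact (measurableSet_lt measurable_const measurable_snd).inter
      (measurableSet_lt measurable_snd measurable_fst)
  set g : ℝ × ℝ → ℝ≥0∞ := fun z =>
    ENNReal.ofReal (z.1 ^ (1/p - 2)) * (W z.2 * ENNReal.ofReal (z.2 ^ (1/q))) with hg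
  have hgm : Measurable g := by
    apply Measurable.mul
    · fun_prop
    · exact (hWm.comp measurable_snd).mul (by fun_prop)
  set F : ℝ → ℝ → ℝ≥0∞ := fun x t => S.indicator g (x, t) with hF
  have hFm : Measurable (Function.uncurry F) := by
    have : Function.uncurry F = S.indicator g := by
      funext z
      cases z
      rfl
    rw [this]
    exact hgm.indicator hSm
  -- inner integral in t
  have hinner : ∀ x : ℝ, ∫⁻ t in Ioi (0:ℝ), F x t =
      ENNReal.ofReal (x ^ (1/p - 2)) * ∫⁻ t in Ioo (0:ℝ) x, W t * ENNReal.ofReal (t ^ (1/q)) := by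
    intro x
    have h1 : ∀ t : ℝ, F x t =
        (Ioo (0:ℝ) x).indicator (fun t => ENNReal.ofReal (x ^ (1/p - 2)) *
          (W t * ENNReal.ofReal (t ^ (1/q)))) t := by
      intro t
      simp only [hF, hS, hg, Set.indicator_apply, mem_setOf_eq, mem_Ioo]
    simp only [h1]
    rw [lintegral_indicator measurableSet_Ioo, Measure.restrict_restrict measurableSet_Ioo,
      inter_eq_left.mpr (fun t ht => ht.1), lintegral_const_mul' _ _ ENNReal.ofReal_ne_top]
  -- inner integral in x
  have houter : ∀ t ∈ Ioi (0:ℝ), ∫⁻ x in Ioi (0:ℝ), F x t = ENNReal.ofReal q * W t := by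
    intro t ht
    rw [mem_Ioi] at ht
    have h1 : ∀ x : ℝ, F x t =
        (Ioi t).indicator (fun x => (W t * ENNReal.ofReal (t ^ (1/q))) *
          ENNReal.ofReal (x ^ (1/p - 2))) x := by
      intro x
      simp only [hF, hS, Set.indicator_apply, mem_setOf_eq, mem_Ioi]
      by_cases hx : t < x
      · simp [hx, ht, hg]
        ring
      · simp [hx]
    simp only [h1]
    rw [lintegral_indicator measurableSet_Ioi, Measure.restrict_restrict measurableSet_Ioi,
      show Ioi t ∩ Ioi (0:ℝ) = Ioi t from inter_eq_left.mpr (Ioi_subset_Ioi ht.le),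
      lintegral_const_mul _ (by fun_prop)]
    have hlt : 1/p - 2 < -1 := by
      have : 1/p < 1 := (div_lt_one hp0).mpr hpq.lt
      linarith
    rw [lintegral_Ioi_rpow hlt ht]
    have he : 1/p - 2 + 1 = -(1/q) := by
      have h := hpq.inv_add_inv_eq_one
      rw [one_div, one_div]
      linarith
    rw [he]
    have hval : -t ^ (-(1/q)) / (-(1/q)) = q * t ^ (-(1/q)) := by
      rw [neg_div_neg_eq, div_eq_mul_inv, one_div, inv_inv, mul_comm]
    rw [hval, mul_assoc, ← ENNReal.ofReal_mul (Real.rpow_nonneg ht.le _),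
      show t ^ (1/q) * (q * t ^ (-(1/q))) = q * (t ^ (1/q) * t ^ (-(1/q))) by ring,
      ← Real.rpow_add ht, add_neg_cancel, Real.rpow_zero, mul_one, mul_comm]
  -- swap
  calc ∫⁻ x in Ioi (0:ℝ), ENNReal.ofReal (x ^ (1/p - 2)) *
        ∫⁻ t in Ioo (0:ℝ) x, W t * ENNReal.ofReal (t ^ (1/q))
      = ∫⁻ x in Ioi (0:ℝ), ∫⁻ t in Ioi (0:ℝ), F x t := by
        refine lintegral_congr fun x => (hinner x).symm
    _ = ∫⁻ t in Ioi (0:ℝ), ∫⁻ x in Ioi (0:ℝ), F x t :=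
        lintegral_lintegral_swap hFm.aemeasurable
    _ = ∫⁻ t in Ioi (0:ℝ), ENNReal.ofReal q * W t :=
        setLIntegral_congr_fun measurableSet_Ioi houter
    _ = ENNReal.ofReal q * ∫⁻ t in Ioi (0:ℝ), W t :=
        lintegral_const_mul' _ _ ENNReal.ofReal_ne_top

end HardyAux

namespace HardyAux

lemma holder_step {p q : ℝ} (hpq : Real.HolderConjugate p q) {G : ℝ → ℝ≥0∞}
    (hGm : Measurable G) {x : ℝ} (hx : 0 < x) :
    (ENNReal.ofReal x⁻¹ * ∫⁻ t in Ioo (0:ℝ) x, G t) ^ p ≤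
      ENNReal.ofReal (q ^ (p - 1)) * ENNReal.ofReal (x ^ (1/p - 2)) *
        ∫⁻ t in Ioo (0:ℝ) x, G t ^ p * ENNReal.ofReal (t ^ (1/q)) := by
  have hp0 : 0 < p := hpq.pos
  have hq0 : 0 < q := hpq.symm.pos
  set s : ℝ := 1 / (p * q) with hs
  set A : ℝ≥0∞ := ∫⁻ t in Ioo (0:ℝ) x, G t ^ p * ENNReal.ofReal (t ^ (1/q)) with hA
  -- Hölder inequality
  have hsplit : ∫⁻ t in Ioo (0:ℝ) x, G t =
      ∫⁻ t in Ioo (0:ℝ) x, (G t * ENNReal.ofReal (t ^ s)) * ENNReal.ofReal (t ^ (-s)) := by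
    refine setLIntegral_congr_fun measurableSet_Ioo ?_
    intro t ht
    dsimp only
    rw [mul_assoc, ← ENNReal.ofReal_mul (Real.rpow_nonneg ht.1.le s),
      ← Real.rpow_add ht.1, add_neg_cancel, Real.rpow_zero, ENNReal.ofReal_one, mul_one]
  have holder := ENNReal.lintegral_mul_le_Lp_mul_Lq (volume.restrict (Ioo (0:ℝ) x)) hpq
    (f := fun t => G t * ENNReal.ofReal (t ^ s)) (g := fun t => ENNReal.ofReal (t ^ (-s)))
    ((hGm.mul (by fun_prop)).aemeasurable)
    ((by fun_prop : Measurable fun t : ℝ => ENNReal.ofReal (t ^ (-s))).aemeasurable)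
  simp only [Pi.mul_apply] at holder
  rw [← hsplit] at holder
  -- identify the first factor
  have hAeq : ∫⁻ t in Ioo (0:ℝ) x, (G t * ENNReal.ofReal (t ^ s)) ^ p = A := by
    refine setLIntegral_congr_fun measurableSet_Ioo ?_
    intro t ht
    dsimp only
    rw [ENNReal.mul_rpow_of_nonneg _ _ hp0.le, ENNReal.ofReal_rpow_of_pos
      (Real.rpow_pos_of_pos ht.1 s), ← Real.rpow_mul ht.1.le]
    congr 3
    simp only [hs]
    field_simp
  -- compute the second factor
  have he : -(1/p) + 1 = 1/q := by
    have h := hpq.inv_add_inv_eq_one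
    rw [one_div, one_div]; linarith
  have hBeq : ∫⁻ t in Ioo (0:ℝ) x, (ENNReal.ofReal (t ^ (-s))) ^ q =
      ENNReal.ofReal (q * x ^ (1/q)) := by
    have h1 : ∀ t ∈ Ioo (0:ℝ) x, (ENNReal.ofReal (t ^ (-s))) ^ q =
        ENNReal.ofReal (t ^ (-(1/p))) := by
      intro t ht
      rw [ENNReal.ofReal_rpow_of_pos (Real.rpow_pos_of_pos ht.1 _), ← Real.rpow_mul ht.1.le]
      congr 2
      simp only [hs]
      field_simp
    have hm1 : (-1:ℝ) < -(1/p) := by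
      rw [neg_lt_neg_iff]
      exact (div_lt_one hp0).mpr hpq.lt
    rw [setLIntegral_congr_fun measurableSet_Ioo h1,
      lintegral_Ioo_rpow hm1 hx, he]
    congr 1
    rw [div_eq_mul_inv, one_div, inv_inv, mul_comm]
  rw [hAeq, hBeq] at holder
  -- raise to the power p
  have hle := ENNReal.rpow_le_rpow (mul_le_mul_right holder (ENNReal.ofReal x⁻¹)) hp0.le
  refine hle.trans_eq ?_
  rw [ENNReal.mul_rpow_of_nonneg _ _ hp0.le, ENNReal.mul_rpow_of_nonneg _ _ hp0.le,
    ← ENNReal.rpow_mul, ← ENNReal.rpow_mul, one_div_mul_cancel hp0.ne', ENNReal.rpow_one]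
  have h2 : (ENNReal.ofReal (q * x ^ (1/q))) ^ ((1:ℝ)/q * p) =
      ENNReal.ofReal (q ^ (p-1)) * ENNReal.ofReal (x ^ ((p-1)/q)) := by
    rw [ENNReal.ofReal_rpow_of_pos (by positivity), Real.mul_rpow hq0.le
      (Real.rpow_nonneg hx.le _), ← Real.rpow_mul hx.le, ENNReal.ofReal_mul
      (Real.rpow_nonneg hq0.le _)]
    have h1qp : (1:ℝ)/q * p = p - 1 := by
      rw [hpq.conjugate_eq]
      have h1 : p - 1 ≠ 0 := ne_of_gt hpq.sub_one_pos
      field_simp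
    rw [h1qp]
    congr 2
    ring
  have h3 : (ENNReal.ofReal x⁻¹) ^ p = ENNReal.ofReal (x ^ (-p)) := by
    rw [← Real.rpow_neg_one x, ENNReal.ofReal_rpow_of_pos (by positivity),
      ← Real.rpow_mul hx.le, neg_one_mul]
  rw [h2, h3]
  rw [show ENNReal.ofReal (x ^ (-p)) * (A * (ENNReal.ofReal (q ^ (p-1)) *
      ENNReal.ofReal (x ^ ((p-1)/q)))) = ENNReal.ofReal (q ^ (p-1)) *
      (ENNReal.ofReal (x ^ (-p)) * ENNReal.ofReal (x ^ ((p-1)/q))) * A by ring]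
  congr 2
  rw [← ENNReal.ofReal_mul (Real.rpow_nonneg hx.le _), ← Real.rpow_add hx]
  congr 1
  have hq : q = p / (p - 1) := hpq.conjugate_eq
  rw [hq]
  have : p - 1 ≠ 0 := ne_of_gt hpq.sub_one_pos
  field_simp
  ring

end HardyAux

namespace HardyAux

lemma key_ineq {p q : ℝ} (hpq : Real.HolderConjugate p q) {G : ℝ → ℝ≥0∞} (hGm : Measurable G) :
    ∫⁻ x in Ioi (0:ℝ), (ENNReal.ofReal x⁻¹ * ∫⁻ t in Ioo (0:ℝ) x, G t) ^ p ≤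
      ENNReal.ofReal q ^ p * ∫⁻ t in Ioi (0:ℝ), G t ^ p := by
  have hp0 : 0 < p := hpq.pos
  have hq0 : 0 < q := hpq.symm.pos
  have hWm : Measurable fun t => G t ^ p := hGm.pow_const p
  calc ∫⁻ x in Ioi (0:ℝ), (ENNReal.ofReal x⁻¹ * ∫⁻ t in Ioo (0:ℝ) x, G t) ^ p
      ≤ ∫⁻ x in Ioi (0:ℝ), ENNReal.ofReal (q ^ (p-1)) * (ENNReal.ofReal (x ^ (1/p - 2)) *
          ∫⁻ t in Ioo (0:ℝ) x, G t ^ p * ENNReal.ofReal (t ^ (1/q))) := by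
        refine lintegral_mono_ae ?_
        filter_upwards [ae_restrict_mem measurableSet_Ioi] with x hx
        rw [← mul_assoc]
        exact holder_step hpq hGm hx
    _ = ENNReal.ofReal (q ^ (p-1)) * ∫⁻ x in Ioi (0:ℝ), ENNReal.ofReal (x ^ (1/p - 2)) *
          ∫⁻ t in Ioo (0:ℝ) x, G t ^ p * ENNReal.ofReal (t ^ (1/q)) :=
        lintegral_const_mul' _ _ ENNReal.ofReal_ne_top
    _ = ENNReal.ofReal (q ^ (p-1)) * (ENNReal.ofReal q * ∫⁻ t in Ioi (0:ℝ), G t ^ p) := by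
        rw [swap_step hpq hWm]
    _ = ENNReal.ofReal q ^ p * ∫⁻ t in Ioi (0:ℝ), G t ^ p := by
        rw [← mul_assoc, ← ENNReal.ofReal_mul (Real.rpow_nonneg hq0.le _),
          ← Real.rpow_add_one hq0.ne' (p-1), sub_add_cancel,
          ENNReal.ofReal_rpow_of_pos hq0]

end HardyAux

/-- Hardy's inequality: for `1 < p < ∞` and every nonnegative integrable function `f`
on `(0,∞)`, the Hardy operator `H f x = x⁻¹ * ∫₀ˣ f` satisfies
`‖H f‖_{L^p(0,∞)} ≤ (p/(p-1)) ‖f‖_{L^p(0,∞)}`. -/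
theorem hardy_inequality (p : ℝ) (hp : 1 < p) (f : ℝ → ℝ)
    (hfm : Measurable f) (hf0 : ∀ x, 0 ≤ f x) (hfi : IntegrableOn f (Ioi 0)) :
    eLpNorm (fun x : ℝ => x⁻¹ * ∫ t in Ioo (0:ℝ) x, f t) (ENNReal.ofReal p)
        (volume.restrict (Ioi 0)) ≤
      ENNReal.ofReal (p / (p - 1)) *
        eLpNorm f (ENNReal.ofReal p) (volume.restrict (Ioi 0)) := by
  have hp0 : 0 < p := lt_trans one_pos hp
  set q : ℝ := p / (p - 1) with hqdef
  have hpq : p.HolderConjugate q := Real.HolderConjugate.conjExponent hp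
  set G : ℝ → ℝ≥0∞ := fun t => ENNReal.ofReal (f t) with hG
  have hGm : Measurable G := hfm.ennreal_ofReal
  have hpne : (ENNReal.ofReal p) ≠ 0 := by
    simp only [ne_eq, ENNReal.ofReal_eq_zero, not_le]
    exact hp0
  have hptop : (ENNReal.ofReal p) ≠ ∞ := ENNReal.ofReal_ne_top
  rw [eLpNorm_eq_lintegral_rpow_enorm_toReal hpne hptop, eLpNorm_eq_lintegral_rpow_enorm_toReal hpne hptop,
    ENNReal.toReal_ofReal hp0.le]
  -- rewrite LHS integrand
  have hL : ∫⁻ x in Ioi (0:ℝ), ‖x⁻¹ * ∫ t in Ioo (0:ℝ) x, f t‖ₑ ^ p =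
      ∫⁻ x in Ioi (0:ℝ), (ENNReal.ofReal x⁻¹ * ∫⁻ t in Ioo (0:ℝ) x, G t) ^ p := by
    refine setLIntegral_congr_fun measurableSet_Ioi ?_
    intro x hx
    dsimp only
    rw [mem_Ioi] at hx
    congr 1
    have h0 : (0:ℝ) ≤ x⁻¹ * ∫ t in Ioo (0:ℝ) x, f t :=
      mul_nonneg (inv_nonneg.mpr hx.le) (integral_nonneg fun t => hf0 t)
    rw [Real.enorm_eq_ofReal h0, ENNReal.ofReal_mul (inv_nonneg.mpr hx.le)]
    congr 1
    rw [ofReal_integral_eq_lintegral_ofReal (hfi.mono_set (fun t ht => ht.1))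
      (Filter.Eventually.of_forall fun t => hf0 t)]
  -- rewrite RHS integrand
  have hR : ∫⁻ t in Ioi (0:ℝ), ‖f t‖ₑ ^ p = ∫⁻ t in Ioi (0:ℝ), G t ^ p := by
    refine lintegral_congr fun t => ?_
    rw [Real.enorm_eq_ofReal (hf0 t)]
  rw [hL, hR]
  have key := HardyAux.key_ineq hpq hGm
  have hmono := ENNReal.rpow_le_rpow key (by positivity : (0:ℝ) ≤ 1/p)
  refine hmono.trans_eq ?_
  rw [ENNReal.mul_rpow_of_nonneg _ _ (by positivity : (0:ℝ) ≤ 1/p), ← ENNReal.rpow_mul,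
    mul_one_div_cancel hp0.ne', ENNReal.rpow_one]
end

section
/- For 1 < p < ∞, the operator norm of the Hardy operator H f(x) = (1/x) ∫₀ˣ f(t) dt on L^p(0,∞) is exactly p/(p-1); that is, the constant p/(p-1) in Hardy's inequality cannot be improved. -/
open MeasureTheory Set ENNReal

lemma lint_rpow_Ioo {x r : ℝ} (hx : 0 < x) (hr : -1 < r) :
    ∫⁻ t in Ioo (0:ℝ) x, ENNReal.ofReal (t ^ r) = ENNReal.ofReal (x ^ (r+1) / (r+1)) := by
  have hint : IntegrableOn (fun t : ℝ => t ^ r) (Ioo 0 x) := by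
    have := (intervalIntegral.intervalIntegrable_rpow' (a := 0) (b := x) hr)
    rw [intervalIntegrable_iff_integrableOn_Ioc_of_le hx.le] at this
    exact this.mono_set Ioo_subset_Ioc_self
  rw [← ofReal_integral_eq_lintegral_ofReal hint]
  · congr 1
    rw [← integral_Ioc_eq_integral_Ioo, ← intervalIntegral.integral_of_le hx.le,
      integral_rpow (Or.inl hr), Real.zero_rpow (by linarith), sub_zero]
  · filter_upwards [ae_restrict_mem measurableSet_Ioo] with t ht
    exact Real.rpow_nonneg ht.1.le r

lemma hardy_pointwise {p : ℝ} (hp : 1 < p) (φ : ℝ → ℝ≥0∞) (hφ : Measurable φ) {x : ℝ} (hx : 0 < x) :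
    ((ENNReal.ofReal x)⁻¹ * ∫⁻ t in Ioo (0:ℝ) x, φ t) ^ p ≤
      ENNReal.ofReal (p/(p-1)) ^ (p/(p/(p-1))) *
        (ENNReal.ofReal (x ^ (-1 - 1/(p/(p-1)))) *
          ∫⁻ t in Ioo (0:ℝ) x, φ t ^ p * ENNReal.ofReal (t ^ (1/(p/(p-1))))) := by
  set q := p/(p-1) with hq
  have hp0 : (0:ℝ) < p := by linarith
  have hp1 : p - 1 ≠ 0 := sub_ne_zero.mpr (ne_of_gt hp)
  have hpq : p.HolderConjugate q := Real.HolderConjugate.conjExponent hp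
  have hq0 : (0:ℝ) < q := hpq.symm.pos
  set s := 1/(p*q) with hs
  have hs0 : 0 < s := by positivity
  have hsp : s * p = 1/q := by rw [hs]; field_simp
  have hsq : s * q = 1/p := by rw [hs, hq]; field_simp
  set K := ∫⁻ t in Ioo (0:ℝ) x, φ t ^ p * ENNReal.ofReal (t ^ (1/q)) with hK
  -- Hölder
  have holder : (∫⁻ t in Ioo (0:ℝ) x, φ t) ≤
      K ^ (1/p) * ENNReal.ofReal (x ^ (1/q) * q) ^ (1/q) := by
    have hsplit : (∫⁻ t in Ioo (0:ℝ) x, φ t) =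
        ∫⁻ t in Ioo (0:ℝ) x,
          ((fun t => φ t * ENNReal.ofReal (t ^ s)) * fun t => ENNReal.ofReal (t ^ (-s))) t := by
      refine setLIntegral_congr_fun measurableSet_Ioo (fun t ht => ?_)
      simp only [Pi.mul_apply]
      rw [mul_assoc, ← ENNReal.ofReal_mul (Real.rpow_nonneg ht.1.le _),
        ← Real.rpow_add ht.1, add_neg_cancel, Real.rpow_zero, ENNReal.ofReal_one, mul_one]
    rw [hsplit]
    refine le_trans (ENNReal.lintegral_mul_le_Lp_mul_Lq _ hpq ?_ ?_) ?_
    · exact (hφ.mul (by fun_prop)).aemeasurable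
    · exact (by fun_prop : Measurable fun t : ℝ => ENNReal.ofReal (t ^ (-s))).aemeasurable
    have h1 : (∫⁻ t in Ioo (0:ℝ) x, (φ t * ENNReal.ofReal (t ^ s)) ^ p) = K := by
      refine setLIntegral_congr_fun measurableSet_Ioo (fun t ht => ?_)
      rw [ENNReal.mul_rpow_of_nonneg _ _ hp0.le,
        ENNReal.ofReal_rpow_of_pos (Real.rpow_pos_of_pos ht.1 _),
        ← Real.rpow_mul ht.1.le, hsp]
    have h2 : (∫⁻ t in Ioo (0:ℝ) x, ENNReal.ofReal (t ^ (-s)) ^ q) =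
        ENNReal.ofReal (x ^ (1/q) * q) := by
      have : (∫⁻ t in Ioo (0:ℝ) x, ENNReal.ofReal (t ^ (-s)) ^ q) =
          ∫⁻ t in Ioo (0:ℝ) x, ENNReal.ofReal (t ^ (-(1/p))) := by
        refine setLIntegral_congr_fun measurableSet_Ioo (fun t ht => ?_)
        rw [ENNReal.ofReal_rpow_of_pos (Real.rpow_pos_of_pos ht.1 _),
          ← Real.rpow_mul ht.1.le, neg_mul, hsq]
      rw [this, lint_rpow_Ioo hx (by have := (div_lt_one hp0).mpr hp; linarith)]
      have he : -(1/p) + 1 = 1/q := by rw [hq]; field_simp; try ring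
      rw [he]
      congr 1
      rw [div_eq_mul_inv, one_div q, inv_inv]
    rw [h1, h2]
  -- raise to the p-th power
  calc ((ENNReal.ofReal x)⁻¹ * ∫⁻ t in Ioo (0:ℝ) x, φ t) ^ p
      ≤ ((ENNReal.ofReal x)⁻¹ * (K ^ (1/p) * ENNReal.ofReal (x ^ (1/q) * q) ^ (1/q))) ^ p := by
        exact ENNReal.rpow_le_rpow (mul_le_mul_right holder _) hp0.le
    _ = (ENNReal.ofReal x)⁻¹ ^ p * (K ^ ((1/p)*p) * ENNReal.ofReal (x ^ (1/q) * q) ^ ((1/q)*p)) := by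
        rw [ENNReal.mul_rpow_of_nonneg _ _ hp0.le, ENNReal.mul_rpow_of_nonneg _ _ hp0.le,
          ← ENNReal.rpow_mul, ← ENNReal.rpow_mul]
    _ = ENNReal.ofReal (x ^ (-p)) * (K * (ENNReal.ofReal (x ^ (p/(q*q))) * ENNReal.ofReal q ^ (p/q))) := by
        have h3 : (ENNReal.ofReal x)⁻¹ ^ p = ENNReal.ofReal (x ^ (-p)) := by
          rw [← ENNReal.ofReal_inv_of_pos hx, ← Real.rpow_neg_one x,
            ENNReal.ofReal_rpow_of_pos (by positivity), ← Real.rpow_mul hx.le, neg_one_mul]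
        have h4 : ENNReal.ofReal (x ^ (1/q) * q) ^ ((1/q)*p) =
            ENNReal.ofReal (x ^ (p/(q*q))) * ENNReal.ofReal q ^ (p/q) := by
          rw [ENNReal.ofReal_mul (Real.rpow_nonneg hx.le _),
            ENNReal.mul_rpow_of_nonneg _ _ (by positivity),
            ENNReal.ofReal_rpow_of_pos (Real.rpow_pos_of_pos hx _),
            ← Real.rpow_mul hx.le,
            show (1/q) * ((1/q) * p) = p/(q*q) from by ring,
            show (1/q) * p = p/q from by ring]
        rw [one_div_mul_cancel hp0.ne', ENNReal.rpow_one, h3, h4]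
    _ = ENNReal.ofReal q ^ (p/q) * (ENNReal.ofReal (x ^ (-1 - 1/q)) * K) := by
        have h6 : ENNReal.ofReal (x ^ (-p)) * ENNReal.ofReal (x ^ (p/(q*q))) =
            ENNReal.ofReal (x ^ (-1 - 1/q)) := by
          rw [← ENNReal.ofReal_mul (Real.rpow_nonneg hx.le _), ← Real.rpow_add hx]
          congr 2
          rw [hq]
          field_simp
          ring
        calc ENNReal.ofReal (x ^ (-p)) * (K * (ENNReal.ofReal (x ^ (p/(q*q))) * ENNReal.ofReal q ^ (p/q)))
            = ENNReal.ofReal q ^ (p/q) * ((ENNReal.ofReal (x ^ (-p)) * ENNReal.ofReal (x ^ (p/(q*q)))) * K) := by ring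
          _ = ENNReal.ofReal q ^ (p/q) * (ENNReal.ofReal (x ^ (-1 - 1/q)) * K) := by rw [h6]

lemma hardy_swap {e : ℝ} (ψ : ℝ → ℝ≥0∞) (hψ : Measurable ψ) :
    ∫⁻ x in Ioi (0:ℝ), ENNReal.ofReal (x ^ e) * ∫⁻ t in Ioo (0:ℝ) x, ψ t
      = ∫⁻ t in Ioi (0:ℝ), ψ t * ∫⁻ x in Ioi t, ENNReal.ofReal (x ^ e) := by
  set S : Set (ℝ × ℝ) := {z | 0 < z.2} ∩ {z | z.2 < z.1} with hSdef
  have hS : MeasurableSet S :=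
    (measurableSet_lt measurable_const measurable_snd).inter
      (measurableSet_lt measurable_snd measurable_fst)
  set F : ℝ × ℝ → ℝ≥0∞ := S.indicator (fun z => ψ z.2 * ENNReal.ofReal (z.1 ^ e)) with hFdef
  have hF : Measurable F := ((hψ.comp measurable_snd).mul (by fun_prop)).indicator hS
  have hL : ∀ x : ℝ, (∫⁻ t, F (x, t)) =
      (Ioi (0:ℝ)).indicator
        (fun x => ENNReal.ofReal (x ^ e) * ∫⁻ t in Ioo (0:ℝ) x, ψ t) x := by
    intro x
    by_cases hx : 0 < x
    · have h1 : (fun t => F (x, t)) =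
          (Ioo (0:ℝ) x).indicator (fun t => ψ t * ENNReal.ofReal (x ^ e)) := by
        funext t
        by_cases ht : t ∈ Ioo (0:ℝ) x
        · rw [indicator_of_mem ht, hFdef,
            indicator_of_mem (by exact ⟨ht.1, ht.2⟩ : (x, t) ∈ S)]
        · rw [indicator_of_notMem ht, hFdef, indicator_of_notMem]
          intro hmem
          exact ht ⟨hmem.1, hmem.2⟩
      rw [h1, lintegral_indicator measurableSet_Ioo, indicator_of_mem (mem_Ioi.mpr hx),
        lintegral_mul_const _ hψ, mul_comm]
    · have h1 : (fun t => F (x, t)) = fun _ => 0 := by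
        funext t
        refine indicator_of_notMem (fun hmem => ?_) _
        have : (0:ℝ) < x := lt_trans hmem.1 hmem.2
        exact hx this
      rw [h1, lintegral_zero, indicator_of_notMem (by simpa using hx)]
  have hR : ∀ t : ℝ, (∫⁻ x, F (x, t)) =
      (Ioi (0:ℝ)).indicator
        (fun t => ψ t * ∫⁻ x in Ioi t, ENNReal.ofReal (x ^ e)) t := by
    intro t
    by_cases ht : 0 < t
    · have h1 : (fun x => F (x, t)) =
          (Ioi t).indicator (fun x => ψ t * ENNReal.ofReal (x ^ e)) := by
        funext x
        by_cases hx : x ∈ Ioi t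
        · rw [indicator_of_mem hx, hFdef, indicator_of_mem (by exact ⟨ht, hx⟩ : (x, t) ∈ S)]
        · rw [indicator_of_notMem hx, hFdef, indicator_of_notMem]
          intro hmem
          exact hx hmem.2
      rw [h1, lintegral_indicator measurableSet_Ioi, indicator_of_mem (mem_Ioi.mpr ht),
        lintegral_const_mul _ (by fun_prop)]
    · have h1 : (fun x => F (x, t)) = fun _ => 0 := by
        funext x
        exact indicator_of_notMem (fun hmem => ht hmem.1) _
      rw [h1, lintegral_zero, indicator_of_notMem (by simpa using ht)]
  calc ∫⁻ x in Ioi (0:ℝ), ENNReal.ofReal (x ^ e) * ∫⁻ t in Ioo (0:ℝ) x, ψ t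
      = ∫⁻ x, ∫⁻ t, F (x, t) := by
        rw [← lintegral_indicator measurableSet_Ioi]
        exact (lintegral_congr hL).symm
    _ = ∫⁻ t, ∫⁻ x, F (x, t) := lintegral_lintegral_swap hF.aemeasurable
    _ = ∫⁻ t in Ioi (0:ℝ), ψ t * ∫⁻ x in Ioi t, ENNReal.ofReal (x ^ e) := by
        rw [← lintegral_indicator measurableSet_Ioi]
        exact lintegral_congr hR

lemma lint_rpow_Ioi {t e : ℝ} (ht : 0 < t) (he : e < -1) :
    ∫⁻ x in Ioi t, ENNReal.ofReal (x ^ e) = ENNReal.ofReal (-t ^ (e+1) / (e+1)) := by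
  rw [← ofReal_integral_eq_lintegral_ofReal (integrableOn_Ioi_rpow_of_lt he ht)]
  · rw [integral_Ioi_rpow_of_lt he ht]
  · filter_upwards [ae_restrict_mem measurableSet_Ioi] with x hx
    exact Real.rpow_nonneg (ht.trans hx).le e

lemma hardy_key {p : ℝ} (hp : 1 < p) (f : ℝ → ℝ) (hf : Measurable f) :
    ∫⁻ x in Ioi (0:ℝ), ((ENNReal.ofReal x)⁻¹ * ∫⁻ t in Ioo (0:ℝ) x, ENNReal.ofReal (f t)) ^ p
      ≤ ENNReal.ofReal (p/(p-1)) ^ p * ∫⁻ t in Ioi (0:ℝ), ENNReal.ofReal (f t) ^ p := by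
  set q := p/(p-1) with hq
  have hp0 : (0:ℝ) < p := by linarith
  have hp1 : p - 1 ≠ 0 := sub_ne_zero.mpr (ne_of_gt hp)
  have hq0 : (0:ℝ) < q := by rw [hq]; exact div_pos hp0 (by linarith)
  have hC : ENNReal.ofReal q ^ (p/q) ≠ ⊤ :=
    ENNReal.rpow_ne_top_of_nonneg (by positivity) ENNReal.ofReal_ne_top
  set ψ : ℝ → ℝ≥0∞ := fun t => ENNReal.ofReal (f t) ^ p * ENNReal.ofReal (t ^ (1/q)) with hψdef
  have hψ : Measurable ψ := by fun_prop
  have he : -1 - 1/q < -1 := by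
    have : 0 < 1/q := by positivity
    linarith
  calc ∫⁻ x in Ioi (0:ℝ), ((ENNReal.ofReal x)⁻¹ * ∫⁻ t in Ioo (0:ℝ) x, ENNReal.ofReal (f t)) ^ p
      ≤ ∫⁻ x in Ioi (0:ℝ), ENNReal.ofReal q ^ (p/q) *
          (ENNReal.ofReal (x ^ (-1 - 1/q)) * ∫⁻ t in Ioo (0:ℝ) x, ψ t) := by
        refine setLIntegral_mono' measurableSet_Ioi fun x hx => ?_
        exact hardy_pointwise hp _ (by fun_prop) (mem_Ioi.mp hx)
    _ = ENNReal.ofReal q ^ (p/q) *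
          ∫⁻ x in Ioi (0:ℝ), ENNReal.ofReal (x ^ (-1 - 1/q)) * ∫⁻ t in Ioo (0:ℝ) x, ψ t :=
        lintegral_const_mul' _ _ hC
    _ = ENNReal.ofReal q ^ (p/q) *
          ∫⁻ t in Ioi (0:ℝ), ψ t * ∫⁻ x in Ioi t, ENNReal.ofReal (x ^ (-1 - 1/q)) := by
        rw [hardy_swap ψ hψ]
    _ = ENNReal.ofReal q ^ (p/q) *
          ∫⁻ t in Ioi (0:ℝ), ENNReal.ofReal q * ENNReal.ofReal (f t) ^ p := by
        congr 1
        refine setLIntegral_congr_fun measurableSet_Ioi (fun t ht => ?_)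
        have ht0 : (0:ℝ) < t := mem_Ioi.mp ht
        rw [lint_rpow_Ioi ht0 he]
        have h1 : -t ^ (-1 - 1/q + 1) / (-1 - 1/q + 1) = q * t ^ (-(1/q)) := by
          rw [show -1 - 1/q + 1 = -(1/q) from by ring, neg_div_neg_eq]
          rw [div_eq_iff (by positivity : (1:ℝ)/q ≠ 0)]
          field_simp
        rw [h1, hψdef]
        simp only []
        rw [mul_assoc, ENNReal.ofReal_mul hq0.le,
          show ENNReal.ofReal (t ^ (1/q)) * (ENNReal.ofReal q * ENNReal.ofReal (t ^ (-(1/q)))) =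
            ENNReal.ofReal q * (ENNReal.ofReal (t ^ (1/q)) * ENNReal.ofReal (t ^ (-(1/q)))) from by ring,
          ← ENNReal.ofReal_mul (Real.rpow_nonneg ht0.le _), ← Real.rpow_add ht0,
          add_neg_cancel, Real.rpow_zero, ENNReal.ofReal_one, mul_one]
        ring
    _ = ENNReal.ofReal q ^ (p/q) *
          (ENNReal.ofReal q * ∫⁻ t in Ioi (0:ℝ), ENNReal.ofReal (f t) ^ p) :=  by
        rw [lintegral_const_mul' _ _ ENNReal.ofReal_ne_top]
    _ = ENNReal.ofReal q ^ p * ∫⁻ t in Ioi (0:ℝ), ENNReal.ofReal (f t) ^ p := by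
        rw [← mul_assoc]
        congr 1
        have hq_ne : ENNReal.ofReal q ≠ 0 := by
          simp [ENNReal.ofReal_eq_zero, not_le, hq0]
        rw [show ENNReal.ofReal q ^ (p/q) * ENNReal.ofReal q =
            ENNReal.ofReal q ^ (p/q) * ENNReal.ofReal q ^ (1:ℝ) from by rw [ENNReal.rpow_one],
          ← ENNReal.rpow_add _ _ hq_ne ENNReal.ofReal_ne_top]
        congr 1
        rw [hq]
        field_simp
        ring

lemma ofReal_setIntegral_le {g : ℝ → ℝ} {s : Set ℝ} (hg0 : ∀ x, 0 ≤ g x) :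
    ENNReal.ofReal (∫ t in s, g t) ≤ ∫⁻ t in s, ENNReal.ofReal (g t) := by
  by_cases hint : IntegrableOn g s volume
  · rw [ofReal_integral_eq_lintegral_ofReal hint (ae_of_all _ hg0)]
  · rw [integral_undef hint]
    simp

lemma hardy_upper {p : ℝ} (hp : 1 < p) (f : ℝ → ℝ) (hf : Measurable f) (hf0 : ∀ x, 0 ≤ f x) :
    eLpNorm (fun x : ℝ => x⁻¹ * ∫ t in Ioo (0:ℝ) x, f t) (ENNReal.ofReal p)
        (volume.restrict (Ioi 0)) ≤
      ENNReal.ofReal (p / (p - 1)) *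
        eLpNorm f (ENNReal.ofReal p) (volume.restrict (Ioi 0)) := by
  have hp0 : (0:ℝ) < p := lt_trans one_pos hp
  have hpne : (ENNReal.ofReal p) ≠ 0 := by simp [ENNReal.ofReal_eq_zero, not_le, hp0]
  have hpt : (ENNReal.ofReal p) ≠ ⊤ := ENNReal.ofReal_ne_top
  rw [eLpNorm_eq_lintegral_rpow_enorm_toReal hpne hpt, eLpNorm_eq_lintegral_rpow_enorm_toReal hpne hpt,
    ENNReal.toReal_ofReal hp0.le]
  have hfnorm : (∫⁻ x in Ioi (0:ℝ), ‖f x‖ₑ ^ p) =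
      ∫⁻ x in Ioi (0:ℝ), ENNReal.ofReal (f x) ^ p :=
    lintegral_congr fun x => by rw [Real.enorm_eq_ofReal (hf0 x)]
  calc (∫⁻ x in Ioi (0:ℝ), ‖x⁻¹ * ∫ t in Ioo (0:ℝ) x, f t‖ₑ ^ p) ^ (1/p)
      ≤ (∫⁻ x in Ioi (0:ℝ),
          ((ENNReal.ofReal x)⁻¹ * ∫⁻ t in Ioo (0:ℝ) x, ENNReal.ofReal (f t)) ^ p) ^ (1/p) := by
        refine ENNReal.rpow_le_rpow (setLIntegral_mono' measurableSet_Ioi fun x hx => ?_)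
          (by positivity)
        have hx0 : (0:ℝ) < x := mem_Ioi.mp hx
        refine ENNReal.rpow_le_rpow ?_ hp0.le
        rw [Real.enorm_eq_ofReal (mul_nonneg (inv_nonneg.mpr hx0.le)
          (integral_nonneg fun t => hf0 t)),
          ENNReal.ofReal_mul (inv_nonneg.mpr hx0.le), ENNReal.ofReal_inv_of_pos hx0]
        exact mul_le_mul_right (ofReal_setIntegral_le hf0) _
    _ ≤ (ENNReal.ofReal (p/(p-1)) ^ p * ∫⁻ t in Ioi (0:ℝ), ENNReal.ofReal (f t) ^ p) ^ (1/p) :=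
        ENNReal.rpow_le_rpow (hardy_key hp f hf) (by positivity)
    _ = ENNReal.ofReal (p/(p-1)) *
          (∫⁻ x in Ioi (0:ℝ), ‖f x‖ₑ ^ p) ^ (1/p) := by
        rw [hfnorm, ENNReal.mul_rpow_of_nonneg _ _ (by positivity), ← ENNReal.rpow_mul,
          mul_one_div, div_self hp0.ne', ENNReal.rpow_one]

lemma bernoulli_lb {a b p : ℝ} (hp : 1 ≤ p) (hb : 0 < b) (hba : b ≤ a) :
    a ^ p - p * (a ^ (p-1) * b) ≤ (a - b) ^ p := by
  have ha : 0 < a := lt_of_lt_of_le hb hba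
  have hs : -1 ≤ -(b/a) := by
    rw [neg_le_neg_iff]
    exact (div_le_one ha).mpr hba
  have key := one_add_mul_self_le_rpow_one_add hs hp
  have hmul := mul_le_mul_of_nonneg_left key (Real.rpow_nonneg ha.le p)
  have h1 : a ^ p * (1 + -(b/a)) ^ p = (a - b) ^ p := by
    rw [← Real.mul_rpow ha.le (by rw [← sub_eq_add_neg]; exact sub_nonneg.mpr ((div_le_one ha).mpr hba))]
    congr 1
    field_simp
    ring
  have h2 : a ^ p * (1 + p * -(b/a)) = a ^ p - p * (a ^ (p-1) * b) := by
    have : a ^ p = a ^ (p-1) * a := by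
      rw [← Real.rpow_add_one ha.ne' (p-1), sub_add_cancel]
    rw [this]
    field_simp
    ring
  rw [h1] at hmul
  rw [← h2]
  linarith [hmul]

lemma ofReal_integral_le' {h : ℝ → ℝ} {μ : Measure ℝ} (hint : Integrable h μ) :
    ENNReal.ofReal (∫ x, h x ∂μ) ≤ ∫⁻ x, ENNReal.ofReal (h x) ∂μ := by
  calc ENNReal.ofReal (∫ x, h x ∂μ) ≤ ENNReal.ofReal (∫ x, max (h x) 0 ∂μ) :=
        ENNReal.ofReal_le_ofReal (integral_mono hint hint.pos_part (fun x => le_max_left _ _))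
    _ = ∫⁻ x, ENNReal.ofReal (max (h x) 0) ∂μ :=
        ofReal_integral_eq_lintegral_ofReal hint.pos_part (ae_of_all _ fun x => le_max_right _ _)
    _ = ∫⁻ x, ENNReal.ofReal (h x) ∂μ := by
        refine lintegral_congr fun x => ?_
        rcases le_or_gt 0 (h x) with h0 | h0
        · rw [max_eq_left h0]
        · rw [max_eq_right h0.le, ENNReal.ofReal_of_nonpos h0.le, ENNReal.ofReal_zero]

lemma hardy_sharp {p : ℝ} (hp : 1 < p) {c : ℝ} (hc0 : 0 < c) (hcq : c < p/(p-1)) :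
    ∃ f : ℝ → ℝ, Measurable f ∧ (∀ x, 0 ≤ f x) ∧
      eLpNorm f (ENNReal.ofReal p) (volume.restrict (Ioi 0)) ≠ 0 ∧
      eLpNorm f (ENNReal.ofReal p) (volume.restrict (Ioi 0)) ≠ ⊤ ∧
      ENNReal.ofReal c * eLpNorm f (ENNReal.ofReal p) (volume.restrict (Ioi 0)) <
        eLpNorm (fun x : ℝ => x⁻¹ * ∫ t in Ioo (0:ℝ) x, f t) (ENNReal.ofReal p)
          (volume.restrict (Ioi 0)) := by
  have hp0 : (0:ℝ) < p := lt_trans one_pos hp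
  have hp1 : p - 1 ≠ 0 := sub_ne_zero.mpr (ne_of_gt hp)
  set q := p/(p-1) with hq
  have hq0 : (0:ℝ) < q := div_pos hp0 (by linarith)
  have hpne : (ENNReal.ofReal p) ≠ 0 := by simp [ENNReal.ofReal_eq_zero, not_le, hp0]
  have hpt : (ENNReal.ofReal p) ≠ ⊤ := ENNReal.ofReal_ne_top
  have hD : 0 < q ^ p - c ^ p := sub_pos.mpr (Real.rpow_lt_rpow hc0.le hcq hp0)
  set L := max (p*q + 1) (q^p * (p*q) / (q^p - c^p) + 1) with hLdef
  have hL1 : p*q + 1 ≤ L := le_max_left _ _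
  have hL2 : q^p * (p*q) / (q^p - c^p) + 1 ≤ L := le_max_right _ _
  have hL0 : 0 < L := lt_of_lt_of_le (by positivity) hL1
  set A := Real.exp L with hAdef
  have hA1 : (1:ℝ) < A := by
    rw [hAdef, show (1:ℝ) = Real.exp 0 from (Real.exp_zero).symm]
    exact Real.exp_lt_exp.mpr hL0
  have hlog : Real.log A = L := Real.log_exp L
  set f := (Ioo (1:ℝ) A).indicator (fun t : ℝ => t ^ (-1/p)) with hfdef
  have hfm : Measurable f :=
    (by fun_prop : Measurable fun t : ℝ => t ^ (-1/p)).indicator measurableSet_Ioo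
  have hf0 : ∀ x, 0 ≤ f x := fun x =>
    indicator_nonneg (fun t ht => Real.rpow_nonneg (by linarith [ht.1] : (0:ℝ) ≤ t) _) x
  -- the inverse-integral over (1, A)
  have hIinv : IntegrableOn (fun x : ℝ => x⁻¹) (Ioo 1 A) := by
    have h := intervalIntegral.intervalIntegrable_inv
      (f := fun x : ℝ => x) (a := 1) (b := A) (μ := volume)
      (fun x hx => ne_of_gt (by rw [uIcc_of_le hA1.le] at hx; linarith [hx.1] : (0:ℝ) < x))
      continuousOn_id
    rw [intervalIntegrable_iff_integrableOn_Ioc_of_le hA1.le] at h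
    exact h.mono_set Ioo_subset_Ioc_self
  have hIinvval : ∫ x in Ioo (1:ℝ) A, x⁻¹ = L := by
    rw [← integral_Ioc_eq_integral_Ioo, ← intervalIntegral.integral_of_le hA1.le,
      integral_inv (by rw [uIcc_of_le hA1.le]; intro h0; linarith [h0.1]), div_one, hlog]
  -- the Lp-norm of f
  have hnorm : eLpNorm f (ENNReal.ofReal p) (volume.restrict (Ioi 0)) =
      ENNReal.ofReal L ^ (1/p) := by
    rw [eLpNorm_eq_lintegral_rpow_enorm_toReal hpne hpt, ENNReal.toReal_ofReal hp0.le]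
    have h1 : ∀ x : ℝ, ‖f x‖ₑ ^ p =
        (Ioo (1:ℝ) A).indicator (fun x => ENNReal.ofReal x⁻¹) x := by
      intro x
      by_cases hx : x ∈ Ioo (1:ℝ) A
      · have hx0 : (0:ℝ) < x := lt_trans one_pos hx.1
        rw [indicator_of_mem hx, show f x = x ^ (-1/p) from indicator_of_mem hx _,
          Real.enorm_eq_ofReal (Real.rpow_nonneg hx0.le _),
          ENNReal.ofReal_rpow_of_pos (Real.rpow_pos_of_pos hx0 _),
          ← Real.rpow_mul hx0.le, show (-1/p) * p = -1 from by field_simp,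
          Real.rpow_neg_one]
      · rw [indicator_of_notMem hx, show f x = 0 from indicator_of_notMem hx _]
        simp only [enorm_zero]
        exact ENNReal.zero_rpow_of_pos hp0
    have hsub : Ioo (1:ℝ) A ∩ Ioi 0 = Ioo 1 A :=
      inter_eq_left.mpr fun x hx => lt_trans one_pos hx.1
    rw [lintegral_congr h1, lintegral_indicator measurableSet_Ioo,
      Measure.restrict_restrict measurableSet_Ioo, hsub]
    congr 1
    rw [← ofReal_integral_eq_lintegral_ofReal hIinv
      (by filter_upwards [ae_restrict_mem measurableSet_Ioo] with x hx;
          exact inv_nonneg.mpr (by linarith [hx.1])), hIinvval]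
  -- Hardy operator value on (1, A)
  have hHf : ∀ x ∈ Ioo (1:ℝ) A, x⁻¹ * ∫ t in Ioo (0:ℝ) x, f t = q * (x ^ (-1/p) - x⁻¹) := by
    intro x hx
    have hx1 : (1:ℝ) < x := hx.1
    have hx0 : (0:ℝ) < x := lt_trans one_pos hx1
    have h1 : ∫ t in Ioo (0:ℝ) x, f t = ∫ t in Ioo (1:ℝ) x, t ^ (-1/p) := by
      rw [hfdef, integral_indicator measurableSet_Ioo,
        Measure.restrict_restrict measurableSet_Ioo]
      congr 1
      congr 1
      ext t
      simp only [mem_inter_iff, mem_Ioo]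
      constructor
      · rintro ⟨⟨h1t, h2t⟩, h3t, h4t⟩; exact ⟨h1t, h4t⟩
      · rintro ⟨h1t, h2t⟩; exact ⟨⟨h1t, lt_trans h2t hx.2⟩, lt_trans one_pos h1t, h2t⟩
    have hexp : (-1/p) + 1 = 1/q := by rw [hq]; field_simp; ring
    have h2 : ∫ t in Ioo (1:ℝ) x, t ^ (-1/p) = q * (x ^ (1/q) - 1) := by
      rw [← integral_Ioc_eq_integral_Ioo, ← intervalIntegral.integral_of_le hx1.le,
        integral_rpow (Or.inl (by
          rw [neg_div]
          have : 1/p < 1 := by rw [div_lt_one hp0]; exact hp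
          linarith : (-1:ℝ) < -1/p)),
        hexp, Real.one_rpow, div_div_eq_mul_div, div_one, mul_comm]
    have h3 : x⁻¹ * x ^ (1/q) = x ^ (-1/p) := by
      rw [← Real.rpow_neg_one x, ← Real.rpow_add hx0]
      congr 1
      rw [hq]; field_simp; ring
    rw [h1, h2, show x⁻¹ * (q * (x ^ (1/q) - 1)) = q * (x⁻¹ * x ^ (1/q)) - q * x⁻¹ from by ring,
      h3]
    ring
  -- nontriviality and finiteness
  refine ⟨f, hfm, hf0, ?_, ?_, ?_⟩
  · rw [hnorm]
    exact (ENNReal.rpow_pos (ENNReal.ofReal_pos.mpr hL0) ENNReal.ofReal_ne_top).ne'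
  · rw [hnorm]
    exact ENNReal.rpow_ne_top_of_nonneg (by positivity) ENNReal.ofReal_ne_top
  -- the strict inequality
  · have hlow : ENNReal.ofReal ((q^p * (L - p*q)) ^ (1/p)) ≤
        eLpNorm (fun x : ℝ => x⁻¹ * ∫ t in Ioo (0:ℝ) x, f t) (ENNReal.ofReal p)
          (volume.restrict (Ioi 0)) := by
      rw [eLpNorm_eq_lintegral_rpow_enorm_toReal hpne hpt, ENNReal.toReal_ofReal hp0.le]
      have hLpq : 0 < L - p*q := by linarith
      rw [← ENNReal.ofReal_rpow_of_pos (by positivity)]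
      refine ENNReal.rpow_le_rpow ?_ (by positivity)
      -- integrability of the lower bound function
      have hI2 : IntegrableOn (fun x : ℝ => x ^ (-1-1/q)) (Ioo 1 A) := by
        have h := intervalIntegral.intervalIntegrable_rpow (r := -1-1/q)
          (a := 1) (b := A) (μ := volume)
          (Or.inr (by rw [uIcc_of_le hA1.le]; intro h0; linarith [h0.1]))
        rw [intervalIntegrable_iff_integrableOn_Ioc_of_le hA1.le] at h
        exact h.mono_set Ioo_subset_Ioc_self
      have hint2 : IntegrableOn (fun x : ℝ => q^p * (x⁻¹ - p * x ^ (-1-1/q))) (Ioo 1 A) :=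
        ((hIinv.sub (hI2.const_mul p)).const_mul (q^p))
      have hI2val : ∫ x in Ioo (1:ℝ) A, x ^ (-1-1/q) = q * (1 - A ^ (-(1/q))) := by
        rw [← integral_Ioc_eq_integral_Ioo, ← intervalIntegral.integral_of_le hA1.le,
          integral_rpow (Or.inr ⟨by intro h0; rw [sub_eq_neg_add] at h0; nlinarith [one_div_pos.mpr hq0],
            by rw [uIcc_of_le hA1.le]; intro h0; linarith [h0.1]⟩),
          show (-1-1/q) + 1 = -(1/q) from by ring, Real.one_rpow]
        rw [div_eq_iff (by simpa using hq0.ne' : -(1/q) ≠ 0)]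
        field_simp
        ring
      calc ENNReal.ofReal (q^p * (L - p*q))
          ≤ ENNReal.ofReal (∫ x in Ioo (1:ℝ) A, q^p * (x⁻¹ - p * x ^ (-1-1/q))) := by
            refine ENNReal.ofReal_le_ofReal ?_
            rw [MeasureTheory.integral_const_mul, integral_sub hIinv (hI2.const_mul p),
              MeasureTheory.integral_const_mul, hIinvval, hI2val]
            have hA0 : 0 ≤ A ^ (-(1/q)) := Real.rpow_nonneg (by linarith) _
            have h8 : q * (1 - A ^ (-(1/q))) ≤ q := by nlinarith
            have h9 : p * (q * (1 - A ^ (-(1/q)))) ≤ p * q :=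
              mul_le_mul_of_nonneg_left h8 hp0.le
            exact mul_le_mul_of_nonneg_left (by linarith) (Real.rpow_nonneg hq0.le p)
        _ ≤ ∫⁻ x in Ioo (1:ℝ) A, ENNReal.ofReal (q^p * (x⁻¹ - p * x ^ (-1-1/q))) :=
            ofReal_integral_le' hint2
        _ ≤ ∫⁻ x in Ioo (1:ℝ) A, ‖x⁻¹ * ∫ t in Ioo (0:ℝ) x, f t‖ₑ ^ p := by
            refine setLIntegral_mono' measurableSet_Ioo fun x hx => ?_
            have hx1 : (1:ℝ) < x := hx.1
            have hx0 : (0:ℝ) < x := lt_trans one_pos hx1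
            have hba : x⁻¹ ≤ x ^ (-1/p) := by
              rw [← Real.rpow_neg_one x]
              refine Real.rpow_le_rpow_of_exponent_le hx1.le ?_
              rw [neg_div]
              have : 1/p < 1 := by rw [div_lt_one hp0]; exact hp
              linarith
            rw [hHf x hx]
            have hnn : 0 ≤ q * (x ^ (-1/p) - x⁻¹) :=
              mul_nonneg hq0.le (sub_nonneg.mpr hba)
            rw [Real.enorm_eq_ofReal hnn, ENNReal.ofReal_rpow_of_nonneg hnn hp0.le]
            refine ENNReal.ofReal_le_ofReal ?_
            rw [Real.mul_rpow hq0.le (sub_nonneg.mpr hba)]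
            refine mul_le_mul_of_nonneg_left ?_ (Real.rpow_nonneg hq0.le p)
            have hb := bernoulli_lb hp.le (inv_pos.mpr hx0) hba
            have e1 : (x ^ (-1/p)) ^ p = x⁻¹ := by
              rw [← Real.rpow_mul hx0.le, show (-1/p)*p = -1 from by field_simp,
                Real.rpow_neg_one]
            have e2 : (x ^ (-1/p)) ^ (p-1) * x⁻¹ = x ^ (-1-1/q) := by
              rw [← Real.rpow_mul hx0.le, ← Real.rpow_neg_one x, ← Real.rpow_add hx0]
              congr 1
              rw [hq]; field_simp; ring
            rw [e1, e2] at hb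
            linarith
        _ ≤ ∫⁻ x in Ioi (0:ℝ), ‖x⁻¹ * ∫ t in Ioo (0:ℝ) x, f t‖ₑ ^ p :=
            lintegral_mono_set (fun x hx => lt_trans one_pos hx.1)
    rw [hnorm]
    have hLpq : 0 < L - p*q := by linarith
    have key : c^p * L < q^p * (L - p*q) := by
      have h5 : (q^p - c^p) * (q^p * (p*q)/(q^p - c^p)) = q^p * (p*q) := by
        field_simp
      have h6 := mul_le_mul_of_nonneg_left hL2 hD.le
      rw [mul_add, h5, mul_one] at h6
      nlinarith
    have hreal : c * L ^ (1/p) < (q^p * (L - p*q)) ^ (1/p) := by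
      have h7 : c * L ^ (1/p) = (c^p * L) ^ (1/p) := by
        rw [Real.mul_rpow (by positivity) hL0.le, ← Real.rpow_mul hc0.le,
          show p * (1/p) = 1 from by field_simp, Real.rpow_one]
      rw [h7]
      exact Real.rpow_lt_rpow (by positivity) key (by positivity)
    calc ENNReal.ofReal c * ENNReal.ofReal L ^ (1/p)
        = ENNReal.ofReal (c * L ^ (1/p)) := by
          rw [ENNReal.ofReal_rpow_of_pos hL0, ← ENNReal.ofReal_mul hc0.le]
      _ < ENNReal.ofReal ((q^p * (L - p*q)) ^ (1/p)) :=
          (ENNReal.ofReal_lt_ofReal_iff (by positivity)).mpr hreal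
      _ ≤ _ := hlow

/-- The operator norm of the Hardy operator `H f x = x⁻¹ ∫₀ˣ f` on `L^p(0,∞)` is exactly
`p/(p-1)`: the inequality `‖H f‖_p ≤ (p/(p-1)) ‖f‖_p` holds for all nonnegative measurable
`f`, and for every `c < p/(p-1)` there is a nontrivial `f` with `‖H f‖_p > c ‖f‖_p`. -/
theorem hardy_operator_norm (p : ℝ) (hp : 1 < p) :
    (∀ f : ℝ → ℝ, Measurable f → (∀ x, 0 ≤ f x) →
      eLpNorm (fun x : ℝ => x⁻¹ * ∫ t in Ioo (0:ℝ) x, f t) (ENNReal.ofReal p)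
          (volume.restrict (Ioi 0)) ≤
        ENNReal.ofReal (p / (p - 1)) *
          eLpNorm f (ENNReal.ofReal p) (volume.restrict (Ioi 0))) ∧
    (∀ c : ℝ, c < p / (p - 1) → ∃ f : ℝ → ℝ, Measurable f ∧ (∀ x, 0 ≤ f x) ∧
      eLpNorm f (ENNReal.ofReal p) (volume.restrict (Ioi 0)) ≠ 0 ∧
      eLpNorm f (ENNReal.ofReal p) (volume.restrict (Ioi 0)) ≠ ⊤ ∧
      ENNReal.ofReal c * eLpNorm f (ENNReal.ofReal p) (volume.restrict (Ioi 0)) <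
        eLpNorm (fun x : ℝ => x⁻¹ * ∫ t in Ioo (0:ℝ) x, f t) (ENNReal.ofReal p)
          (volume.restrict (Ioi 0))) := by
  constructor
  · exact fun f hf hf0 => hardy_upper hp f hf hf0
  · intro c hc
    have hq0 : 0 < p/(p-1) := div_pos (by linarith) (by linarith)
    have hc'0 : 0 < max c ((p/(p-1))/2) :=
      lt_of_lt_of_le (half_pos hq0) (le_max_right _ _)
    have hc'q : max c ((p/(p-1))/2) < p/(p-1) := max_lt hc (half_lt_self hq0)
    obtain ⟨f, h1, h2, h3, h4, h5⟩ := hardy_sharp hp hc'0 hc'q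
    exact ⟨f, h1, h2, h3, h4, lt_of_le_of_lt
      (mul_le_mul_left (ENNReal.ofReal_le_ofReal (le_max_left _ _)) _) h5⟩
end

section
/- For 1 < p < ∞ and nonnegative measurable f on (0,∞)², the two-dimensional rectangular Hardy operator 𝔥f(x₁,x₂) = (x₁x₂)⁻¹ ∫₀^{x₁}∫₀^{x₂} f(t₁,t₂) dt₁ dt₂ satisfies ‖𝔥f‖_{L^p} ≤ (p/(p-1))² ‖f‖_{L^p}. -/
open MeasureTheory Set ENNReal

lemma lint_scale {g : ℝ → ℝ≥0∞} (hg : Measurable g) {c : ℝ} (hc : 0 < c)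
    {s : Set ℝ} (hs : MeasurableSet s) :
    ∫⁻ x in (fun y => c * y) ⁻¹' s, g (c * x) = ENNReal.ofReal c⁻¹ * ∫⁻ t in s, g t := by
  have hm : Measurable fun y : ℝ => c * y := measurable_const_mul c
  have h1 : Measure.map (c * ·) (volume : Measure ℝ) = ENNReal.ofReal |c⁻¹| • volume :=
    Real.map_volume_mul_left hc.ne'
  calc ∫⁻ x in (fun y => c * y) ⁻¹' s, g (c * x)
      = ∫⁻ t in s, g t ∂(Measure.map (c * ·) volume) := by
        rw [Measure.restrict_map hm hs, lintegral_map hg hm]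
    _ = ENNReal.ofReal c⁻¹ * ∫⁻ t in s, g t := by
        rw [h1, Measure.restrict_smul, lintegral_smul_measure, abs_of_pos (inv_pos.2 hc), smul_eq_mul]

lemma lint_prod_set {g : ℝ × ℝ → ℝ≥0∞} (hg : Measurable g) (A B : Set ℝ) :
    ∫⁻ x in A ×ˢ B, g x = ∫⁻ x₁ in A, ∫⁻ x₂ in B, g (x₁, x₂) := by
  rw [Measure.volume_eq_prod, ← Measure.prod_restrict, lintegral_prod _ hg.aemeasurable]

lemma lint_scale2 {g : ℝ × ℝ → ℝ≥0∞} (hg : Measurable g) {c₁ c₂ : ℝ}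
    (h₁ : 0 < c₁) (h₂ : 0 < c₂) {A B : Set ℝ} (hA : MeasurableSet A) (hB : MeasurableSet B) :
    ∫⁻ x in ((fun y => c₁ * y) ⁻¹' A) ×ˢ ((fun y => c₂ * y) ⁻¹' B), g (c₁ * x.1, c₂ * x.2)
      = ENNReal.ofReal c₁⁻¹ * ENNReal.ofReal c₂⁻¹ * ∫⁻ t in A ×ˢ B, g t := by
  have hg1 : Measurable fun x : ℝ × ℝ => g (c₁ * x.1, c₂ * x.2) := by fun_prop
  rw [lint_prod_set hg1, lint_prod_set hg]
  have inner : ∀ x₁ : ℝ, ∫⁻ x₂ in (fun y => c₂ * y) ⁻¹' B, g (c₁ * x₁, c₂ * x₂)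
      = ENNReal.ofReal c₂⁻¹ * ∫⁻ t₂ in B, g (c₁ * x₁, t₂) := fun x₁ =>
    lint_scale (hg.comp measurable_prodMk_left) h₂ hB
  simp_rw [inner]
  rw [lintegral_const_mul' _ _ ENNReal.ofReal_ne_top]
  have hF : Measurable fun t₁ : ℝ => ∫⁻ t₂ in B, g (t₁, t₂) :=
    Measurable.lintegral_prod_right hg
  rw [lint_scale hF h₁ hA]
  ring

lemma lint_Ioo_rpow {a : ℝ} (ha : -1 < a) :
    ∫⁻ s in Ioo (0:ℝ) 1, ENNReal.ofReal s ^ a = ENNReal.ofReal (a + 1)⁻¹ := by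
  have h1 : ∀ᵐ s ∂(volume : Measure ℝ), s ∈ Ioo (0:ℝ) 1 →
      ENNReal.ofReal s ^ a = ENNReal.ofReal (s ^ a) :=
    ae_of_all _ fun s hs => ENNReal.ofReal_rpow_of_pos hs.1
  rw [setLIntegral_congr_fun_ae measurableSet_Ioo h1]
  have hint : IntegrableOn (fun s : ℝ => s ^ a) (Ioo 0 1) := by
    have := (intervalIntegral.intervalIntegrable_rpow' (a := 0) (b := 1) ha).1
    exact (this.mono_set Ioo_subset_Ioc_self)
  rw [← ofReal_integral_eq_lintegral_ofReal hint
    ((ae_restrict_iff' measurableSet_Ioo).2 (ae_of_all _ fun s hs => Real.rpow_nonneg hs.1.le a))]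
  · congr 1
    rw [← integral_Ioc_eq_integral_Ioo, ← intervalIntegral.integral_of_le zero_le_one,
      integral_rpow (Or.inl ha), Real.one_rpow, Real.zero_rpow (by linarith), sub_zero,
      one_div]

lemma rpow_ne_top' {x : ℝ≥0∞} (h0 : x ≠ 0) (ht : x ≠ ⊤) (a : ℝ) : x ^ a ≠ ⊤ := by
  rcases le_or_gt 0 a with h | h
  · exact ENNReal.rpow_ne_top_of_nonneg h ht
  · rw [show a = -(-a) by ring, ENNReal.rpow_neg, ne_eq, ENNReal.inv_eq_top]
    exact (ENNReal.rpow_pos (pos_iff_ne_zero.2 h0) ht).ne'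

lemma lint_sq_rpow {a : ℝ} (ha : -1 < a) :
    ∫⁻ s in Ioo (0:ℝ) 1 ×ˢ Ioo (0:ℝ) 1, (ENNReal.ofReal s.1) ^ a * (ENNReal.ofReal s.2) ^ a
      = ENNReal.ofReal ((a + 1)⁻¹ ^ 2) := by
  have hm : Measurable fun s : ℝ × ℝ => (ENNReal.ofReal s.1) ^ a * (ENNReal.ofReal s.2) ^ a := by
    fun_prop
  rw [lint_prod_set hm]
  have h1 : ∀ᵐ x₁ ∂(volume : Measure ℝ), x₁ ∈ Ioo (0:ℝ) 1 →
      (∫⁻ x₂ in Ioo (0:ℝ) 1, (ENNReal.ofReal x₁) ^ a * (ENNReal.ofReal x₂) ^ a)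
        = (ENNReal.ofReal x₁) ^ a * ENNReal.ofReal (a + 1)⁻¹ := by
    refine ae_of_all _ fun x₁ hx₁ => ?_
    rw [lintegral_const_mul' _ _ (rpow_ne_top'
      (by simp [ENNReal.ofReal_eq_zero, not_le, hx₁.1]) ENNReal.ofReal_ne_top a),
      lint_Ioo_rpow ha]
  rw [setLIntegral_congr_fun_ae measurableSet_Ioo h1,
    lintegral_mul_const' _ _ ENNReal.ofReal_ne_top, lint_Ioo_rpow ha,
    sq, ENNReal.ofReal_mul (inv_nonneg.2 (by linarith))]

lemma hoelder_step {p q : ℝ} (hpq : p.HolderConjugate q) {φ : ℝ × ℝ → ℝ≥0∞}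
    (hφ : Measurable φ) :
    (∫⁻ s in Ioo (0:ℝ) 1 ×ˢ Ioo (0:ℝ) 1, φ s) ^ p
      ≤ (∫⁻ s in Ioo (0:ℝ) 1 ×ˢ Ioo (0:ℝ) 1,
          φ s ^ p * ((ENNReal.ofReal s.1) ^ q⁻¹ * (ENNReal.ofReal s.2) ^ q⁻¹))
        * (ENNReal.ofReal (q ^ 2)) ^ (p / q) := by
  have hp0 : 0 < p := hpq.pos
  have hq0 : 0 < q := hpq.symm.pos
  set r : ℝ := (p * q)⁻¹ with hr
  have hrp : r * p = q⁻¹ := by rw [hr, mul_inv, mul_comm p⁻¹ q⁻¹, mul_assoc, inv_mul_cancel₀ hp0.ne', mul_one]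
  have hrq : r * q = p⁻¹ := by rw [hr, mul_inv, mul_assoc, inv_mul_cancel₀ hq0.ne', mul_one]
  set sq : Set (ℝ × ℝ) := Ioo (0:ℝ) 1 ×ˢ Ioo (0:ℝ) 1 with hsq
  have hsqm : MeasurableSet sq := (measurableSet_Ioo.prod measurableSet_Ioo)
  set u : ℝ × ℝ → ℝ≥0∞ := fun s => φ s * ((ENNReal.ofReal s.1) ^ r * (ENNReal.ofReal s.2) ^ r)
  set v : ℝ × ℝ → ℝ≥0∞ := fun s => (ENNReal.ofReal s.1) ^ (-r) * (ENNReal.ofReal s.2) ^ (-r)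
  have hu : Measurable u := by fun_prop
  have hv : Measurable v := by fun_prop
  have key : ∫⁻ s in sq, φ s = ∫⁻ s in sq, (u * v) s := by
    refine setLIntegral_congr_fun_ae hsqm (ae_of_all _ fun s hs => ?_)
    have h1 : ENNReal.ofReal s.1 ≠ 0 := by
      simp [ENNReal.ofReal_eq_zero, not_le, hs.1.1]
    have h2 : ENNReal.ofReal s.2 ≠ 0 := by
      simp [ENNReal.ofReal_eq_zero, not_le, hs.2.1]
    have e1 : (ENNReal.ofReal s.1) ^ r * (ENNReal.ofReal s.1) ^ (-r) = 1 := by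
      rw [← ENNReal.rpow_add _ _ h1 ENNReal.ofReal_ne_top]; simp
    have e2 : (ENNReal.ofReal s.2) ^ r * (ENNReal.ofReal s.2) ^ (-r) = 1 := by
      rw [← ENNReal.rpow_add _ _ h2 ENNReal.ofReal_ne_top]; simp
    show φ s = φ s * _ * _
    rw [mul_assoc, mul_mul_mul_comm, e1, e2, one_mul, mul_one]
  have hold := ENNReal.lintegral_mul_le_Lp_mul_Lq
    (volume.restrict sq) hpq hu.aemeasurable hv.aemeasurable
  rw [key]
  have hup : ∀ s : ℝ × ℝ, u s ^ p
      = φ s ^ p * ((ENNReal.ofReal s.1) ^ q⁻¹ * (ENNReal.ofReal s.2) ^ q⁻¹) := by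
    intro s
    rw [ENNReal.mul_rpow_of_nonneg _ _ hp0.le, ENNReal.mul_rpow_of_nonneg _ _ hp0.le,
      ← ENNReal.rpow_mul, ← ENNReal.rpow_mul, hrp]
  have hvq : ∀ s : ℝ × ℝ, v s ^ q
      = (ENNReal.ofReal s.1) ^ (-p⁻¹) * (ENNReal.ofReal s.2) ^ (-p⁻¹) := by
    intro s
    rw [ENNReal.mul_rpow_of_nonneg _ _ hq0.le, ← ENNReal.rpow_mul, ← ENNReal.rpow_mul,
      neg_mul, hrq]
  have hB : ∫⁻ s in sq, v s ^ q = ENNReal.ofReal (q ^ 2) := by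
    simp only [hvq]
    rw [hsq, lint_sq_rpow (by rw [neg_lt, neg_neg]; exact inv_lt_one_of_one_lt₀ hpq.lt)]
    have h3 : -p⁻¹ + 1 = q⁻¹ := by
      have := hpq.inv_add_inv_eq_one
      linarith
    rw [h3, inv_inv]
  calc (∫⁻ s in sq, (u * v) s) ^ p
      ≤ ((∫⁻ s in sq, u s ^ p) ^ (1/p) * (∫⁻ s in sq, v s ^ q) ^ (1/q)) ^ p :=
        ENNReal.rpow_le_rpow hold hp0.le
    _ = (∫⁻ s in sq, u s ^ p) * (∫⁻ s in sq, v s ^ q) ^ (p / q) := by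
        rw [ENNReal.mul_rpow_of_nonneg _ _ hp0.le, ← ENNReal.rpow_mul, ← ENNReal.rpow_mul,
          one_div, one_div, inv_mul_cancel₀ hp0.ne', ENNReal.rpow_one, inv_mul_eq_div]
    _ = _ := by
        rw [hB]
        congr 1
        exact lintegral_congr fun s => hup s

/-- Two-dimensional rectangular Hardy inequality on `(0,∞)²` with constant `(p/(p-1))²`. -/
theorem rectangular_hardy_two_dim (p : ℝ) (hp : 1 < p) (f : ℝ × ℝ → ℝ)
    (hfm : Measurable f) (hf0 : ∀ x, 0 ≤ f x) :
    eLpNorm (fun x : ℝ × ℝ => (x.1 * x.2)⁻¹ * ∫ t in Ioo (0:ℝ) x.1 ×ˢ Ioo (0:ℝ) x.2, f t)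
        (ENNReal.ofReal p) (volume.restrict (Ioi 0 ×ˢ Ioi 0)) ≤
      ENNReal.ofReal ((p / (p - 1)) ^ 2) *
        eLpNorm f (ENNReal.ofReal p) (volume.restrict (Ioi 0 ×ˢ Ioi 0)) := by
  have hp0 : 0 < p := by linarith
  set q : ℝ := p / (p - 1) with hqdef
  have hpq : p.HolderConjugate q := Real.HolderConjugate.conjExponent hp
  have hq0 : 0 < q := hpq.symm.pos
  have hinv : p⁻¹ + q⁻¹ = 1 := by
    have := hpq.inv_add_inv_eq_one
    simpa [one_div] using this
  set Q : Set (ℝ × ℝ) := Ioi (0:ℝ) ×ˢ Ioi (0:ℝ) with hQ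
  have hQm : MeasurableSet Q := measurableSet_Ioi.prod measurableSet_Ioi
  set sqr : Set (ℝ × ℝ) := Ioo (0:ℝ) 1 ×ˢ Ioo (0:ℝ) 1 with hsqr
  have hsqm : MeasurableSet sqr := measurableSet_Ioo.prod measurableSet_Ioo
  set F : ℝ × ℝ → ℝ≥0∞ := fun t => ENNReal.ofReal (f t) with hF
  have hFm : Measurable F := ENNReal.measurable_ofReal.comp hfm
  set H : ℝ × ℝ → ℝ := fun x => (x.1 * x.2)⁻¹ * ∫ t in Ioo (0:ℝ) x.1 ×ˢ Ioo (0:ℝ) x.2, f t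
    with hH
  have hpne : (ENNReal.ofReal p) ≠ 0 := by simp [hp0, ENNReal.ofReal_eq_zero, not_le]
  have hptop : (ENNReal.ofReal p) ≠ ⊤ := ENNReal.ofReal_ne_top
  have htoReal : (ENNReal.ofReal p).toReal = p := ENNReal.toReal_ofReal hp0.le
  rw [eLpNorm_eq_lintegral_rpow_enorm_toReal hpne hptop, eLpNorm_eq_lintegral_rpow_enorm_toReal hpne hptop,
    htoReal]
  have hfnn : ∀ t : ℝ × ℝ, ‖f t‖ₑ = F t := fun t => Real.enorm_eq_ofReal (hf0 t)
  simp only [hfnn]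
  set IF : ℝ≥0∞ := ∫⁻ t in Q, F t ^ p with hIF
  have hq2pos : (0:ℝ) < q ^ 2 := by positivity
  by_cases htop : IF = ⊤
  · rw [htop, ENNReal.top_rpow_of_pos (by positivity), ENNReal.mul_top
      (by simp [ENNReal.ofReal_eq_zero, not_le, hq2pos, hq0.ne'])]
    exact le_top
  -- the pointwise comparison with the unit-square average
  set Φ : ℝ × ℝ → ℝ≥0∞ := fun x => ∫⁻ s in sqr, F (x.1 * s.1, x.2 * s.2) with hΦ
  have step1 : ∀ x ∈ Q, ENNReal.ofReal (H x) ≤ Φ x := by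
    rintro ⟨x₁, x₂⟩ hx
    have hx1 : 0 < x₁ := hx.1
    have hx2 : 0 < x₂ := hx.2
    have e1 : Φ (x₁, x₂) = ENNReal.ofReal x₁⁻¹ * ENNReal.ofReal x₂⁻¹ *
        ∫⁻ t in Ioo (0:ℝ) x₁ ×ˢ Ioo (0:ℝ) x₂, F t := by
      have h2 := lint_scale2 hFm hx1 hx2 (A := Ioo (0:ℝ) x₁) (B := Ioo (0:ℝ) x₂)
        measurableSet_Ioo measurableSet_Ioo
      rw [preimage_const_mul_Ioo₀ _ _ hx1, preimage_const_mul_Ioo₀ _ _ hx2, zero_div, zero_div,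
        div_self hx1.ne', div_self hx2.ne'] at h2
      exact h2
    have e2 : ENNReal.ofReal (H (x₁, x₂)) ≤ ENNReal.ofReal x₁⁻¹ * ENNReal.ofReal x₂⁻¹ *
        ∫⁻ t in Ioo (0:ℝ) x₁ ×ˢ Ioo (0:ℝ) x₂, F t := by
      have hHval : H (x₁, x₂) = (x₁ * x₂)⁻¹ * ∫ t in Ioo (0:ℝ) x₁ ×ˢ Ioo (0:ℝ) x₂, f t := rfl
      rw [hHval, mul_inv, ENNReal.ofReal_mul (by positivity),
        ENNReal.ofReal_mul (by positivity)]
      gcongr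
      by_cases hint : IntegrableOn f (Ioo (0:ℝ) x₁ ×ˢ Ioo (0:ℝ) x₂) volume
      · rw [ofReal_integral_eq_lintegral_ofReal hint (ae_of_all _ fun t => hf0 t)]
      · rw [integral_undef hint]; simp
    exact e2.trans e1.symm.le
  -- Hölder bound pointwise in x
  set w : ℝ × ℝ → ℝ≥0∞ := fun s =>
    (ENNReal.ofReal s.1) ^ q⁻¹ * (ENNReal.ofReal s.2) ^ q⁻¹ with hw
  have hwm : Measurable w := by fun_prop
  have hwnetop : ∀ s, w s ≠ ⊤ := fun s => ENNReal.mul_ne_top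
    (ENNReal.rpow_ne_top_of_nonneg (by positivity) ENNReal.ofReal_ne_top)
    (ENNReal.rpow_ne_top_of_nonneg (by positivity) ENNReal.ofReal_ne_top)
  have step2 : ∀ x : ℝ × ℝ, Φ x ^ p ≤
      (∫⁻ s in sqr, F (x.1 * s.1, x.2 * s.2) ^ p * w s) * (ENNReal.ofReal (q ^ 2)) ^ (p / q) :=
    fun x => hoelder_step hpq (by fun_prop)
  set C₁ : ℝ≥0∞ := (ENNReal.ofReal (q ^ 2)) ^ (p / q) with hC₁
  have hC₁top : C₁ ≠ ⊤ :=
    ENNReal.rpow_ne_top_of_nonneg (by positivity) ENNReal.ofReal_ne_top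
  -- main claim at the level of lintegrals
  have claim : ∫⁻ x in Q, (ENNReal.ofReal (H x)) ^ p ≤ (ENNReal.ofReal (q ^ 2)) ^ p * IF := by
    have c1 : ∫⁻ x in Q, (ENNReal.ofReal (H x)) ^ p ≤
        ∫⁻ x in Q, (∫⁻ s in sqr, F (x.1 * s.1, x.2 * s.2) ^ p * w s) * C₁ := by
      refine lintegral_mono_ae ((ae_restrict_iff' hQm).2 (ae_of_all _ fun x hx => ?_))
      exact (ENNReal.rpow_le_rpow (step1 x hx) hp0.le).trans (step2 x)
    have c2 : ∫⁻ x in Q, (∫⁻ s in sqr, F (x.1 * s.1, x.2 * s.2) ^ p * w s) * C₁ =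
        (∫⁻ s in sqr, ∫⁻ x in Q, F (x.1 * s.1, x.2 * s.2) ^ p * w s) * C₁ := by
      rw [lintegral_mul_const' _ _ hC₁top]
      congr 1
      exact lintegral_lintegral_swap (by fun_prop)
    have c3 : ∫⁻ s in sqr, ∫⁻ x in Q, F (x.1 * s.1, x.2 * s.2) ^ p * w s =
        ENNReal.ofReal (q ^ 2) * IF := by
      have inner : ∀ s ∈ sqr, (∫⁻ x in Q, F (x.1 * s.1, x.2 * s.2) ^ p * w s) =
          ((ENNReal.ofReal s.1) ^ (-p⁻¹) * (ENNReal.ofReal s.2) ^ (-p⁻¹)) * IF := by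
        rintro ⟨s₁, s₂⟩ hs
        have hs1 : 0 < s₁ := hs.1.1
        have hs2 : 0 < s₂ := hs.2.1
        have h01 : ENNReal.ofReal s₁ ≠ 0 := by simp [ENNReal.ofReal_eq_zero, not_le, hs1]
        have h02 : ENNReal.ofReal s₂ ≠ 0 := by simp [ENNReal.ofReal_eq_zero, not_le, hs2]
        rw [lintegral_mul_const' _ _ (hwnetop _)]
        have hscale : (∫⁻ x in Q, F (x.1 * s₁, x.2 * s₂) ^ p) =
            ENNReal.ofReal s₁⁻¹ * ENNReal.ofReal s₂⁻¹ * IF := by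
          have h2 := lint_scale2 (g := fun t => F t ^ p) (by fun_prop) hs1 hs2
            (A := Ioi (0:ℝ)) (B := Ioi (0:ℝ)) measurableSet_Ioi measurableSet_Ioi
          rw [preimage_const_mul_Ioi₀ _ hs1, preimage_const_mul_Ioi₀ _ hs2, zero_div,
            zero_div] at h2
          have hcomm : ∫⁻ x in Q, F (x.1 * s₁, x.2 * s₂) ^ p
              = ∫⁻ x in Q, (fun t => F t ^ p) (s₁ * x.1, s₂ * x.2) :=
            lintegral_congr fun x => by rw [mul_comm x.1 s₁, mul_comm x.2 s₂]
          rw [hcomm, hQ, h2, hIF, hQ]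
        rw [hscale]
        have hx1 : (ENNReal.ofReal s₁) ^ q⁻¹ * (ENNReal.ofReal s₁)⁻¹ =
            (ENNReal.ofReal s₁) ^ (-p⁻¹) := by
          rw [← ENNReal.rpow_neg_one, ← ENNReal.rpow_add _ _ h01 ENNReal.ofReal_ne_top]
          congr 1; linarith
        have hx2 : (ENNReal.ofReal s₂) ^ q⁻¹ * (ENNReal.ofReal s₂)⁻¹ =
            (ENNReal.ofReal s₂) ^ (-p⁻¹) := by
          rw [← ENNReal.rpow_neg_one, ← ENNReal.rpow_add _ _ h02 ENNReal.ofReal_ne_top]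
          congr 1; linarith
        rw [ENNReal.ofReal_inv_of_pos hs1, ENNReal.ofReal_inv_of_pos hs2]
        rw [← hx1, ← hx2]
        ring
      rw [setLIntegral_congr_fun_ae hsqm (ae_of_all _ inner),
        lintegral_mul_const' _ _ htop]
      congr 1
      rw [hsqr, lint_sq_rpow (by rw [neg_lt, neg_neg]; exact inv_lt_one_of_one_lt₀ hp)]
      congr 1
      have : -p⁻¹ + 1 = q⁻¹ := by linarith
      rw [this, inv_inv]
    calc ∫⁻ x in Q, (ENNReal.ofReal (H x)) ^ p
        ≤ (∫⁻ s in sqr, ∫⁻ x in Q, F (x.1 * s.1, x.2 * s.2) ^ p * w s) * C₁ := c1.trans c2.le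
      _ = ENNReal.ofReal (q ^ 2) * IF * C₁ := by rw [c3]
      _ = (ENNReal.ofReal (q ^ 2)) ^ p * IF := by
          rw [mul_right_comm]
          congr 1
          have hne0 : ENNReal.ofReal (q ^ 2) ≠ 0 := by
            simp [ENNReal.ofReal_eq_zero, not_le, hq2pos, hq0.ne']
          have hstep : ENNReal.ofReal (q ^ 2) * C₁ = ENNReal.ofReal (q ^ 2) ^ (1 + p / q) := by
            rw [ENNReal.rpow_add _ _ hne0 ENNReal.ofReal_ne_top, ENNReal.rpow_one, hC₁]
          have hpq' : 1 + p / q = p := by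
            have hq' : q⁻¹ = 1 - p⁻¹ := by linarith
            rw [div_eq_mul_inv, hq', mul_sub, mul_inv_cancel₀ hp0.ne']
            ring
          rw [hstep, hpq']
    -- done
  -- conclude
  have hHcong : ∫⁻ x in Q, ‖H x‖ₑ ^ p = ∫⁻ x in Q, (ENNReal.ofReal (H x)) ^ p := by
    refine setLIntegral_congr_fun_ae hQm (ae_of_all _ fun x hx => ?_)
    have hHnn : 0 ≤ H x := by
      have h1 : 0 < x.1 * x.2 := mul_pos hx.1 hx.2
      exact mul_nonneg (inv_nonneg.2 h1.le) (integral_nonneg fun t => hf0 t)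
    rw [Real.enorm_eq_ofReal hHnn]
  rw [hHcong]
  refine (ENNReal.rpow_le_rpow claim (by positivity : (0:ℝ) ≤ 1 / p)).trans_eq ?_
  rw [ENNReal.mul_rpow_of_nonneg _ _ (by positivity), ← ENNReal.rpow_mul, mul_one_div,
    div_self hp0.ne', ENNReal.rpow_one]
end

section
/- For 1 < p < ∞, n ≥ 1, and nonnegative measurable f on ℝⁿ, the spherical Hardy operator H f(x) = |B(0,|x|)|⁻¹ ∫_{|y|<|x|} f(y) dy satisfies ‖H f‖_{L^p(ℝⁿ)} ≤ (p/(p-1)) ‖f‖_{L^p(ℝⁿ)}, with a constant independent of the dimension n. -/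
open MeasureTheory Set

open MeasureTheory Set Metric Measure
open scoped ENNReal

variable {E : Type*} [NormedAddCommGroup E] [NormedSpace ℝ E] [MeasurableSpace E]
  [BorelSpace E] [FiniteDimensional ℝ E] [Nontrivial E]
  (μ : Measure E) [μ.IsAddHaarMeasure]

local notation "dim" => Module.finrank ℝ

lemma lintegral_fun_norm_addHaar' {g : ℝ → ℝ≥0∞} (hg : Measurable g) :
    ∫⁻ x, g ‖x‖ ∂μ = (dim E) * μ (ball 0 1) *
      ∫⁻ r in Ioi (0 : ℝ), ENNReal.ofReal (r ^ (dim E - 1)) * g r := by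
  have h0 : ∫⁻ x, g ‖x‖ ∂μ = ∫⁻ x in ({0}ᶜ : Set E), g ‖x‖ ∂μ := by
    rw [restrict_compl_singleton]
  rw [h0, ← lintegral_subtype_comap (measurableSet_singleton (0:E)).compl]
  have h1 := (μ.measurePreserving_homeomorphUnitSphereProd).lintegral_comp
    (f := fun z : sphere (0:E) 1 × Ioi (0:ℝ) => g z.2)
    ((hg.comp measurable_subtype_coe).comp measurable_snd)
  have h2 : ∀ x : ({0}ᶜ : Set E), g ‖(x : E)‖ =
      (fun z : sphere (0:E) 1 × Ioi (0:ℝ) => g z.2) (homeomorphUnitSphereProd E x) := by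
    intro x; simp [homeomorphUnitSphereProd]
  calc ∫⁻ x : ({0}ᶜ : Set E), g ‖(x : E)‖ ∂(μ.comap (↑))
      = ∫⁻ z : sphere (0:E) 1 × Ioi (0:ℝ), g z.2
          ∂(μ.toSphere.prod (volumeIoiPow (dim E - 1))) := by
        rw [← h1]; exact lintegral_congr fun x => h2 x
    _ = μ.toSphere univ * ∫⁻ r : Ioi (0:ℝ), g r ∂(volumeIoiPow (dim E - 1)) := by
        have hm : Measurable (fun z : sphere (0:E) 1 × Ioi (0:ℝ) => g z.2) := by
          exact (hg.comp measurable_subtype_coe).comp measurable_snd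
        rw [lintegral_prod (fun z : sphere (0:E) 1 × Ioi (0:ℝ) => g z.2) hm.aemeasurable]
        simp [lintegral_const, mul_comm]
    _ = (dim E) * μ (ball 0 1) * ∫⁻ r in Ioi (0 : ℝ), ENNReal.ofReal (r ^ (dim E - 1)) * g r := by
        have hm2 : Measurable (fun r : Ioi (0:ℝ) => g r) := hg.comp measurable_subtype_coe
        rw [toSphere_apply_univ, Measure.volumeIoiPow,
          lintegral_withDensity_eq_lintegral_mul _
            ((measurable_subtype_coe.pow_const _).ennreal_ofReal) hm2]
        rw [← lintegral_subtype_comap measurableSet_Ioi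
          (fun r : ℝ => ENNReal.ofReal (r ^ (dim E - 1)) * g r)]
        rfl

lemma L1 {e : ℝ} (he : -1 < e) {R : ℝ} (hR : 0 < R) :
    ∫⁻ r in Ioo (0 : ℝ) R, ENNReal.ofReal (r ^ e) = ENNReal.ofReal (R ^ (e + 1) / (e + 1)) := by
  rw [← ofReal_integral_eq_lintegral_ofReal]
  · congr 1
    rw [restrict_congr_set Ioo_ae_eq_Ioc, ← intervalIntegral.integral_of_le hR.le,
      integral_rpow (Or.inl he), Real.zero_rpow (by linarith)]
    ring
  · exact ((intervalIntegral.intervalIntegrable_rpow' he (a := 0) (b := R)).1).mono_set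
      Ioo_subset_Ioc_self
  · filter_upwards [ae_restrict_mem measurableSet_Ioo] with r hr
    exact Real.rpow_nonneg hr.1.le e

lemma L2 {e : ℝ} (he : e < -1) {R : ℝ} (hR : 0 < R) :
    ∫⁻ r in Ioi R, ENNReal.ofReal (r ^ e) = ENNReal.ofReal (R ^ (e + 1) / (-(e + 1))) := by
  rw [← ofReal_integral_eq_lintegral_ofReal (integrableOn_Ioi_rpow_of_lt he hR)]
  · rw [integral_Ioi_rpow_of_lt he hR, div_neg, neg_div]
  · filter_upwards [ae_restrict_mem measurableSet_Ioi] with r hr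
    exact Real.rpow_nonneg (hR.trans hr).le e

lemma W_ball {s : ℝ} (hs : -(dim E : ℝ) < s) {R : ℝ} (hR : 0 < R) :
    ∫⁻ y in ball (0 : E) R, (ENNReal.ofReal ‖y‖) ^ s ∂μ
      = (dim E) * μ (ball 0 1) *
        ENNReal.ofReal (R ^ ((dim E : ℝ) + s) / ((dim E : ℝ) + s)) := by
  have hN1 : 1 ≤ dim E := Module.finrank_pos
  have hWm : Measurable (fun r : ℝ => (Iio R).indicator (fun r => (ENNReal.ofReal r) ^ s) r) :=
    Measurable.indicator (measurable_id.ennreal_ofReal.pow_const s) measurableSet_Iio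
  have key : ∫⁻ y in ball (0 : E) R, (ENNReal.ofReal ‖y‖) ^ s ∂μ
      = ∫⁻ x, ((Iio R).indicator (fun r => (ENNReal.ofReal r) ^ s)) ‖x‖ ∂μ := by
    rw [← lintegral_indicator measurableSet_ball]
    refine lintegral_congr fun x => ?_
    by_cases hx : x ∈ ball (0 : E) R
    · rw [indicator_of_mem hx, indicator_of_mem (by simpa [mem_ball_zero_iff] using hx)]
    · rw [indicator_of_notMem hx, indicator_of_notMem (by simpa [mem_ball_zero_iff] using hx)]
  rw [key, lintegral_fun_norm_addHaar' μ hWm, mul_assoc, mul_assoc]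
  congr 2
  calc ∫⁻ r in Ioi (0:ℝ), ENNReal.ofReal (r ^ (dim E - 1)) *
          (Iio R).indicator (fun r => (ENNReal.ofReal r) ^ s) r
      = ∫⁻ r in Ioi (0:ℝ), (Iio R).indicator
          (fun r => ENNReal.ofReal (r ^ (dim E - 1)) * (ENNReal.ofReal r) ^ s) r := by
        refine lintegral_congr fun r => ?_
        by_cases h : r ∈ Iio R
        · simp [indicator_of_mem h]
        · simp [indicator_of_notMem h]
    _ = ∫⁻ r in Iio R ∩ Ioi (0:ℝ),
          ENNReal.ofReal (r ^ (dim E - 1)) * (ENNReal.ofReal r) ^ s := by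
        rw [lintegral_indicator measurableSet_Iio, Measure.restrict_restrict measurableSet_Iio]
    _ = ∫⁻ r in Ioo (0:ℝ) R, ENNReal.ofReal (r ^ ((dim E : ℝ) - 1 + s)) := by
        rw [show Iio R ∩ Ioi (0:ℝ) = Ioo 0 R by ext r; simp [mem_Ioo, and_comm]]
        refine setLIntegral_congr_fun measurableSet_Ioo (fun r hr => ?_)
        rw [ENNReal.ofReal_rpow_of_pos hr.1, ← ENNReal.ofReal_mul (pow_nonneg hr.1.le _),
          ← Real.rpow_natCast r (dim E - 1), ← Real.rpow_add hr.1]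
        congr 2
        push_cast [Nat.cast_sub hN1]
        ring
    _ = ENNReal.ofReal (R ^ ((dim E : ℝ) + s) / ((dim E : ℝ) + s)) := by
        rw [L1 (by push_cast; linarith) hR]
        congr 2 <;> ring

lemma W_compl {s : ℝ} (hs : s < -(dim E : ℝ)) {R : ℝ} (hR : 0 < R) :
    ∫⁻ y in (closedBall (0 : E) R)ᶜ, (ENNReal.ofReal ‖y‖) ^ s ∂μ
      = (dim E) * μ (ball 0 1) *
        ENNReal.ofReal (R ^ ((dim E : ℝ) + s) / (-((dim E : ℝ) + s))) := by
  have hN1 : 1 ≤ dim E := Module.finrank_pos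
  have hWm : Measurable (fun r : ℝ => (Ioi R).indicator (fun r => (ENNReal.ofReal r) ^ s) r) :=
    Measurable.indicator (measurable_id.ennreal_ofReal.pow_const s) measurableSet_Ioi
  have key : ∫⁻ y in (closedBall (0 : E) R)ᶜ, (ENNReal.ofReal ‖y‖) ^ s ∂μ
      = ∫⁻ x, ((Ioi R).indicator (fun r => (ENNReal.ofReal r) ^ s)) ‖x‖ ∂μ := by
    rw [← lintegral_indicator measurableSet_closedBall.compl]
    refine lintegral_congr fun x => ?_
    have hx : x ∈ (closedBall (0 : E) R)ᶜ ↔ ‖x‖ ∈ Ioi R := by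
      simp [mem_closedBall_zero_iff, not_le]
    by_cases h : x ∈ (closedBall (0 : E) R)ᶜ
    · rw [indicator_of_mem h, indicator_of_mem (hx.1 h)]
    · rw [indicator_of_notMem h, indicator_of_notMem (fun hc => h (hx.2 hc))]
  rw [key, lintegral_fun_norm_addHaar' μ hWm, mul_assoc, mul_assoc]
  congr 2
  calc ∫⁻ r in Ioi (0:ℝ), ENNReal.ofReal (r ^ (dim E - 1)) *
          (Ioi R).indicator (fun r => (ENNReal.ofReal r) ^ s) r
      = ∫⁻ r in Ioi (0:ℝ), (Ioi R).indicator
          (fun r => ENNReal.ofReal (r ^ (dim E - 1)) * (ENNReal.ofReal r) ^ s) r := by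
        refine lintegral_congr fun r => ?_
        by_cases h : r ∈ Ioi R
        · simp [indicator_of_mem h]
        · simp [indicator_of_notMem h]
    _ = ∫⁻ r in Ioi R ∩ Ioi (0:ℝ),
          ENNReal.ofReal (r ^ (dim E - 1)) * (ENNReal.ofReal r) ^ s := by
        rw [lintegral_indicator measurableSet_Ioi, Measure.restrict_restrict measurableSet_Ioi]
    _ = ∫⁻ r in Ioi R, ENNReal.ofReal (r ^ ((dim E : ℝ) - 1 + s)) := by
        rw [inter_eq_left.2 (Ioi_subset_Ioi hR.le)]
        refine setLIntegral_congr_fun measurableSet_Ioi (fun r hr => ?_)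
        have hr0 : (0:ℝ) < r := hR.trans hr
        rw [ENNReal.ofReal_rpow_of_pos hr0, ← ENNReal.ofReal_mul (pow_nonneg hr0.le _),
          ← Real.rpow_natCast r (dim E - 1), ← Real.rpow_add hr0]
        congr 2
        push_cast [Nat.cast_sub hN1]
        ring
    _ = ENNReal.ofReal (R ^ ((dim E : ℝ) + s) / (-((dim E : ℝ) + s))) := by
        rw [L2 (by push_cast; linarith) hR]
        congr 2 <;> ring

private lemma exp_ineq {A p q : ℝ} (hA : 0 < A) (hpq : Real.HolderConjugate p q) :
    -(A * p) + A / q * (p - 1) < -A := by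
  have h1 : 0 < p - 1 := by linarith [hpq.lt]
  have h2 : A / q < A := div_lt_self hA hpq.symm.lt
  calc -(A * p) + A / q * (p - 1) < -(A * p) + A * (p - 1) := by
        have := mul_lt_mul_of_pos_right h2 h1
        linarith
    _ = -A := by ring

lemma hardy_aux (p q : ℝ) (hpq : Real.HolderConjugate p q)
    (F : E → ℝ≥0∞) (hF : Measurable F) (hFt : ∀ y, F y ≠ ∞) :
    ∫⁻ x, ((μ (ball (0 : E) ‖x‖))⁻¹ * ∫⁻ y in ball (0 : E) ‖x‖, F y ∂μ) ^ p ∂μ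
      ≤ ENNReal.ofReal q ^ p * ∫⁻ x, F x ^ p ∂μ := by
  have hp1 : 1 < p := hpq.lt
  have hq1 : 1 < q := hpq.symm.lt
  have hp0 : 0 < p := hpq.pos
  have hq0 : 0 < q := hpq.symm.pos
  have hN : 0 < Module.finrank ℝ E := Module.finrank_pos
  set Nr : ℝ := (Module.finrank ℝ E : ℝ) with hNr_def
  have hNr : 0 < Nr := by rw [hNr_def]; exact_mod_cast hN
  set μB : ℝ≥0∞ := μ (ball (0 : E) 1) with hμB_def
  have hμB0 : μB ≠ 0 := (measure_ball_pos μ 0 one_pos).ne'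
  have hμBt : μB ≠ ∞ := measure_ball_lt_top.ne
  set c : ℝ≥0∞ := (Module.finrank ℝ E : ℝ≥0∞) * μB with hc_def
  set T : ℝ≥0∞ := c * ENNReal.ofReal ((Nr / q)⁻¹) with hT_def
  have hT0 : T ≠ 0 := by
    simp only [hT_def, hc_def, mul_ne_zero_iff]
    refine ⟨⟨?_, hμB0⟩, ?_⟩
    · exact_mod_cast hN.ne'
    · rw [Ne, ENNReal.ofReal_eq_zero, not_le]
      positivity
  have hTt : T ≠ ∞ := by
    simp only [hT_def, hc_def]
    exact ENNReal.mul_ne_top (ENNReal.mul_ne_top (ENNReal.natCast_ne_top _) hμBt)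
      ENNReal.ofReal_ne_top
  set h : E → ℝ≥0∞ := fun y => F y ^ p * (ENNReal.ofReal ‖y‖) ^ (Nr / q) with hh_def
  have hhm : Measurable h := (hF.pow_const p).mul
    ((measurable_norm.ennreal_ofReal).pow_const _)
  have hht : ∀ y, h y ≠ ∞ := fun y => ENNReal.mul_ne_top
    (ENNReal.rpow_ne_top_of_nonneg hp0.le (hFt y))
    (ENNReal.rpow_ne_top_of_nonneg (by positivity) ENNReal.ofReal_ne_top)
  set eR : ℝ := -(Nr * p) + (Nr / q) * (p - 1) with heR_def
  set Cst : ℝ≥0∞ := μB⁻¹ ^ p * T ^ (p - 1) with hCst_def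
  have hCstt : Cst ≠ ∞ := ENNReal.mul_ne_top
    (ENNReal.rpow_ne_top_of_nonneg hp0.le (ENNReal.inv_ne_top.2 hμB0))
    (ENNReal.rpow_ne_top_of_nonneg (by linarith) hTt)
  have hae : ∀ᵐ x ∂μ, x ≠ (0 : E) := by
    rw [ae_iff]
    simpa using measure_singleton (0 : E)
  -- useful exponent identities
  have hNq : Nr + -(Nr / p) = Nr / q := by
    have hinv : 1 - p⁻¹ = q⁻¹ := hpq.one_sub_inv
    calc Nr + -(Nr / p) = Nr * (1 - p⁻¹) := by ring
      _ = Nr * q⁻¹ := by rw [hinv]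
      _ = Nr / q := by ring
  have heR2 : Nr + eR = -(Nr / q) := by
    have hmul : p * q = p + q := hpq.mul_eq_add
    rw [heR_def]
    field_simp
    nlinarith [hmul]
  -- pointwise Hölder bound
  have step1 : ∀ x : E, x ≠ 0 →
      ((μ (ball (0 : E) ‖x‖))⁻¹ * ∫⁻ y in ball (0 : E) ‖x‖, F y ∂μ) ^ p
        ≤ Cst * (ENNReal.ofReal ‖x‖) ^ eR * ∫⁻ y in ball (0 : E) ‖x‖, h y ∂μ := by
    intro x hx
    set r : ℝ := ‖x‖ with hr_def
    have hr : 0 < r := norm_pos_iff.2 hx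
    set a : ℝ := Nr / (p * q) with ha_def
    have hap : a * p = Nr / q := by rw [ha_def]; field_simp
    have haq : a * q = Nr / p := by rw [ha_def]; field_simp
    have hWr0 : ENNReal.ofReal r ≠ 0 := by
      rw [Ne, ENNReal.ofReal_eq_zero, not_le]; exact hr
    have hWrt : ENNReal.ofReal r ≠ ∞ := ENNReal.ofReal_ne_top
    have hHold : ∫⁻ y in ball (0 : E) r, F y ∂μ
        ≤ (∫⁻ y in ball (0 : E) r, h y ∂μ) ^ (1/p)
          * (∫⁻ y in ball (0 : E) r, (ENNReal.ofReal ‖y‖) ^ (-(Nr/p)) ∂μ) ^ (1/q) := by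
      have h1 : ∫⁻ y in ball (0 : E) r, F y ∂μ
          = ∫⁻ y in ball (0 : E) r,
              (F y * (ENNReal.ofReal ‖y‖) ^ a) * (ENNReal.ofReal ‖y‖) ^ (-a) ∂μ := by
        refine lintegral_congr_ae ?_
        filter_upwards [ae_restrict_of_ae hae] with y hy
        have hy0 : ENNReal.ofReal ‖y‖ ≠ 0 := by
          rw [Ne, ENNReal.ofReal_eq_zero, not_le]; exact norm_pos_iff.2 hy
        rw [mul_assoc, ← ENNReal.rpow_add _ _ hy0 ENNReal.ofReal_ne_top, add_neg_cancel,
          ENNReal.rpow_zero, mul_one]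
      have h2 := ENNReal.lintegral_mul_le_Lp_mul_Lq (μ.restrict (ball (0 : E) r)) hpq
        ((hF.mul (measurable_norm.ennreal_ofReal.pow_const a)).aemeasurable)
        ((measurable_norm.ennreal_ofReal.pow_const (-a)).aemeasurable)
      simp only [Pi.mul_apply] at h2
      rw [← h1] at h2
      have e1 : ∀ y : E, (F y * (ENNReal.ofReal ‖y‖) ^ a) ^ p = h y := fun y => by
        rw [ENNReal.mul_rpow_of_nonneg _ _ hp0.le, ← ENNReal.rpow_mul, hap]
      have e2 : ∀ y : E, ((ENNReal.ofReal ‖y‖) ^ (-a)) ^ q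
          = (ENNReal.ofReal ‖y‖) ^ (-(Nr/p)) := fun y => by
        rw [← ENNReal.rpow_mul, neg_mul, haq]
      simp only [e1, e2] at h2
      exact h2
    have hK : ∫⁻ y in ball (0 : E) r, (ENNReal.ofReal ‖y‖) ^ (-(Nr/p)) ∂μ
        = T * (ENNReal.ofReal r) ^ (Nr / q) := by
      have hs' : -((Module.finrank ℝ E : ℝ)) < -(Nr/p) := by
        rw [← hNr_def]
        have := div_lt_self hNr hp1
        linarith
      have hb := W_ball μ (s := -(Nr/p)) hs' hr
      rw [← hNr_def, ← hμB_def, ← hc_def, hNq] at hb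
      rw [hb, hT_def, div_eq_mul_inv, ENNReal.ofReal_mul (Real.rpow_nonneg hr.le _),
        ← ENNReal.ofReal_rpow_of_pos hr]
      ring
    have hBinv : (μ (ball (0 : E) r))⁻¹ = (ENNReal.ofReal r) ^ (-Nr) * μB⁻¹ := by
      have h0 : ENNReal.ofReal (r ^ Module.finrank ℝ E) ≠ 0 := by
        rw [Ne, ENNReal.ofReal_eq_zero, not_le]; positivity
      rw [Measure.addHaar_ball μ 0 hr.le, ← hμB_def,
        ENNReal.mul_inv (Or.inl h0) (Or.inl ENNReal.ofReal_ne_top)]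
      congr 1
      rw [← Real.rpow_natCast r (Module.finrank ℝ E), ← ENNReal.ofReal_rpow_of_pos hr,
        ← ENNReal.rpow_neg, ← hNr_def]
    set J : ℝ≥0∞ := ∫⁻ y in ball (0 : E) r, h y ∂μ with hJ_def
    have f1 : ((ENNReal.ofReal r) ^ (-Nr : ℝ)) ^ p = (ENNReal.ofReal r) ^ (-(Nr * p)) := by
      rw [← ENNReal.rpow_mul, neg_mul]
    have f2 : (J ^ (1/p)) ^ p = J := by
      rw [← ENNReal.rpow_mul, one_div, inv_mul_cancel₀ hp0.ne', ENNReal.rpow_one]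
    have f3 : ((T * (ENNReal.ofReal r) ^ (Nr/q)) ^ (1/q)) ^ p
        = T ^ (p - 1) * (ENNReal.ofReal r) ^ ((Nr/q) * (p - 1)) := by
      rw [← ENNReal.rpow_mul, show 1/q * p = p - 1 by
          rw [← hpq.div_conj_eq_sub_one]; ring,
        ENNReal.mul_rpow_of_nonneg _ _ (by linarith : (0:ℝ) ≤ p - 1), ← ENNReal.rpow_mul]
    have hWsum : (ENNReal.ofReal r) ^ (-(Nr * p)) * (ENNReal.ofReal r) ^ ((Nr/q) * (p - 1))
        = (ENNReal.ofReal r) ^ eR := by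
      rw [← ENNReal.rpow_add _ _ hWr0 hWrt, heR_def]
    calc ((μ (ball (0 : E) r))⁻¹ * ∫⁻ y in ball (0 : E) r, F y ∂μ) ^ p
        ≤ ((μ (ball (0 : E) r))⁻¹
            * (J ^ (1/p) * (T * (ENNReal.ofReal r) ^ (Nr/q)) ^ (1/q))) ^ p := by
          refine ENNReal.rpow_le_rpow (mul_le_mul_right ?_ _) hp0.le
          rw [← hK]; exact hHold
      _ = ((ENNReal.ofReal r) ^ (-Nr : ℝ)) ^ p * μB⁻¹ ^ p
            * ((J ^ (1/p)) ^ p * ((T * (ENNReal.ofReal r) ^ (Nr/q)) ^ (1/q)) ^ p) := by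
          rw [hBinv, ENNReal.mul_rpow_of_nonneg _ _ hp0.le,
            ENNReal.mul_rpow_of_nonneg _ _ hp0.le, ENNReal.mul_rpow_of_nonneg _ _ hp0.le]
      _ = (ENNReal.ofReal r) ^ (-(Nr * p)) * μB⁻¹ ^ p
            * (J * (T ^ (p - 1) * (ENNReal.ofReal r) ^ ((Nr/q) * (p - 1)))) := by
          rw [f1, f2, f3]
      _ = Cst * (ENNReal.ofReal r) ^ eR * J := by
          rw [hCst_def, ← hWsum]; ring
  set S : Set (E × E) := {w : E × E | ‖w.2‖ < ‖w.1‖} with hS_def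
  have hSm : MeasurableSet S := (isOpen_lt (continuous_norm.comp continuous_snd)
    (continuous_norm.comp continuous_fst)).measurableSet
  set Φ : E → E → ℝ≥0∞ := fun x y =>
    S.indicator (fun w : E × E => Cst * (ENNReal.ofReal ‖w.1‖) ^ eR * h w.2) (x, y) with hΦ_def
  have hΦm : Measurable (Function.uncurry Φ) := by
    have hu : Function.uncurry Φ
        = S.indicator (fun w : E × E => Cst * (ENNReal.ofReal ‖w.1‖) ^ eR * h w.2) := rfl
    rw [hu]
    exact Measurable.indicator
      ((measurable_const.mul
        (((measurable_norm.comp measurable_fst).ennreal_ofReal).pow_const eR)).mul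
        (hhm.comp measurable_snd)) hSm
  have hWne : ∀ z : E, z ≠ 0 → (ENNReal.ofReal ‖z‖) ^ eR ≠ ∞ := by
    intro z hz
    have hb0 : ENNReal.ofReal ‖z‖ ≠ 0 := by
      rw [Ne, ENNReal.ofReal_eq_zero, not_le]; exact norm_pos_iff.2 hz
    intro hcon
    rcases ENNReal.rpow_eq_top_iff.1 hcon with ⟨h1, _⟩ | ⟨h1, _⟩
    · exact hb0 h1
    · exact ENNReal.ofReal_ne_top h1
  have step2 : ∀ x : E, x ≠ 0 →
      Cst * (ENNReal.ofReal ‖x‖) ^ eR * ∫⁻ y in ball (0 : E) ‖x‖, h y ∂μ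
        = ∫⁻ y, Φ x y ∂μ := by
    intro x hx
    have hct : Cst * (ENNReal.ofReal ‖x‖) ^ eR ≠ ∞ :=
      ENNReal.mul_ne_top hCstt (hWne x hx)
    have hind : ∀ y : E, Φ x y
        = (ball (0 : E) ‖x‖).indicator
            (fun y => Cst * (ENNReal.ofReal ‖x‖) ^ eR * h y) y := by
      intro y
      by_cases hy : ‖y‖ < ‖x‖
      · simp only [hΦ_def]
        rw [indicator_of_mem (by exact hy : (x, y) ∈ S),
          indicator_of_mem (by rwa [mem_ball_zero_iff])]
      · simp only [hΦ_def]
        rw [indicator_of_notMem (by exact hy : (x, y) ∉ S),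
          indicator_of_notMem (by rwa [mem_ball_zero_iff])]
    rw [lintegral_congr hind, lintegral_indicator measurableSet_ball,
      lintegral_const_mul' _ _ hct]
  have step3 : ∫⁻ x, ((μ (ball (0 : E) ‖x‖))⁻¹ * ∫⁻ y in ball (0 : E) ‖x‖, F y ∂μ) ^ p ∂μ
      ≤ ∫⁻ x, ∫⁻ y, Φ x y ∂μ ∂μ := by
    refine lintegral_mono_ae ?_
    filter_upwards [hae] with x hx
    rw [← step2 x hx]
    exact step1 x hx
  rw [lintegral_lintegral_swap hΦm.aemeasurable] at step3
  -- inner integral computation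
  have step4 : ∀ y : E, y ≠ 0 → ∫⁻ x, Φ x y ∂μ = (Cst * T) * F y ^ p := by
    intro y hy
    have hWy0 : ENNReal.ofReal ‖y‖ ≠ 0 := by
      rw [Ne, ENNReal.ofReal_eq_zero, not_le]; exact norm_pos_iff.2 hy
    have hry : (0 : ℝ) < ‖y‖ := norm_pos_iff.2 hy
    have hind : ∀ x : E, Φ x y
        = ((closedBall (0 : E) ‖y‖)ᶜ).indicator
            (fun x => (Cst * h y) * (ENNReal.ofReal ‖x‖) ^ eR) x := by
      intro x
      by_cases hxy : ‖y‖ < ‖x‖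
      · simp only [hΦ_def]
        rw [indicator_of_mem (by exact hxy : (x, y) ∈ S),
          indicator_of_mem (by simpa [mem_closedBall_zero_iff, not_le] using hxy)]
        ring
      · simp only [hΦ_def]
        rw [indicator_of_notMem (by exact hxy : (x, y) ∉ S),
          indicator_of_notMem (by simpa [mem_closedBall_zero_iff, not_le] using hxy)]
    have hs' : eR < -((Module.finrank ℝ E : ℝ)) := by
      rw [heR_def, ← hNr_def]
      exact exp_ineq hNr hpq
    have hc2 := W_compl μ (s := eR) hs' hry
    rw [← hNr_def, ← hμB_def, ← hc_def, heR2] at hc2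
    rw [lintegral_congr hind, lintegral_indicator measurableSet_closedBall.compl,
      lintegral_const_mul' _ _ (ENNReal.mul_ne_top hCstt (hht y)), hc2]
    have hT2 : c * ENNReal.ofReal (‖y‖ ^ (-(Nr / q)) / (-(-(Nr / q))))
        = T * (ENNReal.ofReal ‖y‖) ^ (-(Nr / q)) := by
      rw [neg_neg, hT_def, div_eq_mul_inv,
        ENNReal.ofReal_mul (Real.rpow_nonneg hry.le _),
        ← ENNReal.ofReal_rpow_of_pos hry]
      ring
    rw [hT2]
    simp only [hh_def]
    have hcancel : (ENNReal.ofReal ‖y‖) ^ (Nr / q) * (ENNReal.ofReal ‖y‖) ^ (-(Nr / q))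
        = 1 := by
      rw [← ENNReal.rpow_add _ _ hWy0 ENNReal.ofReal_ne_top, add_neg_cancel,
        ENNReal.rpow_zero]
    calc Cst * (F y ^ p * ENNReal.ofReal ‖y‖ ^ (Nr / q))
          * (T * ENNReal.ofReal ‖y‖ ^ (-(Nr / q)))
        = (Cst * T) * F y ^ p
            * ((ENNReal.ofReal ‖y‖) ^ (Nr / q) * (ENNReal.ofReal ‖y‖) ^ (-(Nr / q))) := by
          ring
      _ = (Cst * T) * F y ^ p := by rw [hcancel, mul_one]
  have step5 : ∫⁻ y, ∫⁻ x, Φ x y ∂μ ∂μ = (Cst * T) * ∫⁻ y, F y ^ p ∂μ := by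
    rw [← lintegral_const_mul' _ _ (ENNReal.mul_ne_top hCstt hTt)]
    refine lintegral_congr_ae ?_
    filter_upwards [hae] with y hy
    exact step4 y hy
  have step6 : Cst * T = ENNReal.ofReal q ^ p := by
    have hTp : T ^ (p - 1) * T = T ^ p := by
      nth_rewrite 2 [← ENNReal.rpow_one T]
      rw [← ENNReal.rpow_add _ _ hT0 hTt, sub_add_cancel]
    have hμT : μB⁻¹ * T = ENNReal.ofReal q := by
      rw [hT_def, hc_def, show (Module.finrank ℝ E : ℝ≥0∞) = ENNReal.ofReal Nr by
        rw [hNr_def, ENNReal.ofReal_natCast]]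
      calc μB⁻¹ * (ENNReal.ofReal Nr * μB * ENNReal.ofReal ((Nr/q)⁻¹))
          = (μB⁻¹ * μB) * (ENNReal.ofReal Nr * ENNReal.ofReal ((Nr/q)⁻¹)) := by ring
        _ = ENNReal.ofReal (Nr * (Nr/q)⁻¹) := by
            rw [ENNReal.inv_mul_cancel hμB0 hμBt, one_mul, ← ENNReal.ofReal_mul hNr.le]
        _ = ENNReal.ofReal q := by
            congr 1
            field_simp
    calc Cst * T = μB⁻¹ ^ p * (T ^ (p - 1) * T) := by rw [hCst_def]; ring
      _ = μB⁻¹ ^ p * T ^ p := by rw [hTp]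
      _ = (μB⁻¹ * T) ^ p := (ENNReal.mul_rpow_of_nonneg _ _ hp0.le).symm
      _ = ENNReal.ofReal q ^ p := by rw [hμT]
  calc ∫⁻ x, ((μ (ball (0 : E) ‖x‖))⁻¹ * ∫⁻ y in ball (0 : E) ‖x‖, F y ∂μ) ^ p ∂μ
      ≤ ∫⁻ y, ∫⁻ x, Φ x y ∂μ ∂μ := step3
    _ = (Cst * T) * ∫⁻ y, F y ^ p ∂μ := step5
    _ = ENNReal.ofReal q ^ p * ∫⁻ y, F y ^ p ∂μ := by rw [step6]



/-- Spherical Hardy inequality on `ℝⁿ`: the averaging operator over balls centered at the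
origin is bounded on `L^p(ℝⁿ)` with norm constant `p/(p-1)`, independent of the dimension. -/
theorem spherical_hardy (n : ℕ) (hn : 1 ≤ n) (p : ℝ) (hp : 1 < p)
    (f : EuclideanSpace ℝ (Fin n) → ℝ) (hfm : Measurable f) (hf0 : ∀ x, 0 ≤ f x) :
    eLpNorm (fun x : EuclideanSpace ℝ (Fin n) =>
        (volume (Metric.ball (0 : EuclideanSpace ℝ (Fin n)) ‖x‖)).toReal⁻¹ *
          ∫ y in Metric.ball (0 : EuclideanSpace ℝ (Fin n)) ‖x‖, f y)
        (ENNReal.ofReal p) volume ≤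
      ENNReal.ofReal (p / (p - 1)) * eLpNorm f (ENNReal.ofReal p) volume := by
  haveI : Nontrivial (EuclideanSpace ℝ (Fin n)) :=
    Module.nontrivial_of_finrank_pos (R := ℝ) (by rw [finrank_euclideanSpace, Fintype.card_fin]; omega)
  have hp0 : 0 < p := lt_trans one_pos hp
  set q : ℝ := p / (p - 1) with hq_def
  have hpq : Real.HolderConjugate p q := (Real.holderConjugate_iff_eq_conjExponent hp).2 hq_def
  have hpne : (ENNReal.ofReal p) ≠ 0 := by
    rw [Ne, ENNReal.ofReal_eq_zero, not_le]; exact hp0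
  have hpt : (ENNReal.ofReal p) ≠ ∞ := ENNReal.ofReal_ne_top
  rw [eLpNorm_eq_lintegral_rpow_enorm_toReal hpne hpt, eLpNorm_eq_lintegral_rpow_enorm_toReal hpne hpt,
    ENNReal.toReal_ofReal hp0.le]
  set F : EuclideanSpace ℝ (Fin n) → ℝ≥0∞ := fun y => ENNReal.ofReal (f y) with hF_def
  have hFm : Measurable F := hfm.ennreal_ofReal
  have hFt : ∀ y, F y ≠ ∞ := fun y => ENNReal.ofReal_ne_top
  have hae : ∀ᵐ x ∂(volume : Measure (EuclideanSpace ℝ (Fin n))), x ≠ 0 := by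
    rw [ae_iff]
    simpa using measure_singleton (0 : EuclideanSpace ℝ (Fin n))
  have key : ∫⁻ x : EuclideanSpace ℝ (Fin n), (‖(volume (ball (0 : EuclideanSpace ℝ (Fin n)) ‖x‖)).toReal⁻¹ *
        ∫ y in ball (0 : EuclideanSpace ℝ (Fin n)) ‖x‖, f y‖₊ : ℝ≥0∞) ^ p ∂volume
      ≤ ∫⁻ x : EuclideanSpace ℝ (Fin n), ((volume (ball (0 : EuclideanSpace ℝ (Fin n)) ‖x‖))⁻¹ *
          ∫⁻ y in ball (0 : EuclideanSpace ℝ (Fin n)) ‖x‖, F y ∂volume) ^ p ∂volume := by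
    refine lintegral_mono_ae ?_
    filter_upwards [hae] with x hx
    refine ENNReal.rpow_le_rpow ?_ hp0.le
    set B : ℝ≥0∞ := volume (ball (0 : EuclideanSpace ℝ (Fin n)) ‖x‖) with hB_def
    have hb0 : B ≠ 0 := (measure_ball_pos _ _ (norm_pos_iff.2 hx)).ne'
    have hbt : B ≠ ∞ := measure_ball_lt_top.ne
    have hint_nonneg : (0:ℝ) ≤ ∫ y in ball (0 : EuclideanSpace ℝ (Fin n)) ‖x‖, f y :=
      integral_nonneg fun y => hf0 y
    have h1 : (‖B.toReal⁻¹ * ∫ y in ball (0 : EuclideanSpace ℝ (Fin n)) ‖x‖, f y‖₊ : ℝ≥0∞)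
        = ENNReal.ofReal (B.toReal⁻¹ * ∫ y in ball (0 : EuclideanSpace ℝ (Fin n)) ‖x‖, f y) :=
      Real.enorm_eq_ofReal (mul_nonneg (inv_nonneg.2 ENNReal.toReal_nonneg) hint_nonneg)
    rw [h1, ENNReal.ofReal_mul (inv_nonneg.2 ENNReal.toReal_nonneg)]
    have h2 : ENNReal.ofReal B.toReal⁻¹ = B⁻¹ := by
      rw [ENNReal.ofReal_inv_of_pos (ENNReal.toReal_pos hb0 hbt), ENNReal.ofReal_toReal hbt]
    rw [h2]
    refine mul_le_mul_right ?_ _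
    rw [integral_eq_lintegral_of_nonneg_ae
      (Filter.Eventually.of_forall fun y => hf0 y) hfm.aestronglyMeasurable]
    exact ENNReal.ofReal_toReal_le
  have main := hardy_aux (volume : Measure (EuclideanSpace ℝ (Fin n))) p q hpq F hFm hFt
  have hnorm : ∀ y, (‖f y‖₊ : ℝ≥0∞) = F y := fun y => Real.enorm_eq_ofReal (hf0 y)
  calc (∫⁻ x : EuclideanSpace ℝ (Fin n), (‖(volume (ball (0 : EuclideanSpace ℝ (Fin n)) ‖x‖)).toReal⁻¹ *
          ∫ y in ball (0 : EuclideanSpace ℝ (Fin n)) ‖x‖, f y‖₊ : ℝ≥0∞) ^ p ∂volume) ^ (1/p)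
      ≤ ((ENNReal.ofReal q) ^ p * ∫⁻ x, F x ^ p ∂volume) ^ (1/p) :=
        ENNReal.rpow_le_rpow (le_trans key main) (by positivity)
    _ = ENNReal.ofReal q * (∫⁻ x, F x ^ p ∂volume) ^ (1/p) := by
        rw [ENNReal.mul_rpow_of_nonneg _ _ (by positivity : (0:ℝ) ≤ 1/p),
          ← ENNReal.rpow_mul, mul_one_div, div_self hp0.ne', ENNReal.rpow_one]
    _ = ENNReal.ofReal q * (∫⁻ x, (‖f x‖₊ : ℝ≥0∞) ^ p ∂volume) ^ (1/p) := by
        simp only [hnorm]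
end

section
/- Let 1 ≤ p < ∞ and let φ : [0,1]² → [0,∞) be measurable with C := ∫₀¹∫₀¹ t₁^{-Q₁/p} t₂^{-Q₂/p} φ(t₁,t₂) dt₁ dt₂ < ∞, where Qᵢ = 2nᵢ+2. Then for every f ∈ L^p(ℝ^{2n₁+1} × ℝ^{2n₂+1}), the weighted Hardy operator P_{φ,2}f(x₁,x₂) = ∫₀¹∫₀¹ f(δ_{t₁}x₁, δ_{t₂}x₂) φ(t₁,t₂) dt₁ dt₂ satisfies ‖P_{φ,2}f‖_{L^p} ≤ C ‖f‖_{L^p}. -/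
open MeasureTheory Set
open Module
open scoped ENNReal NNReal

/-- The Heisenberg group `ℍⁿ`, modelled as `ℝ^{2n} × ℝ`. -/
abbrev Heis (n : ℕ) : Type := (Fin (2 * n) → ℝ) × ℝ

/-- The Heisenberg (Korányi) norm `|x|_h = ((∑ xᵢ²)² + t²)^{1/4}`. -/
noncomputable def hnorm {n : ℕ} (x : Heis n) : ℝ :=
  ((∑ i, x.1 i ^ 2) ^ 2 + x.2 ^ 2) ^ ((1 : ℝ) / 4)

/-- The Heisenberg dilation `δ_r(x, t) = (r x, r² t)`. -/
def hdil {n : ℕ} (r : ℝ) (x : Heis n) : Heis n :=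
  (fun i => r * x.1 i, r ^ 2 * x.2)

private lemma ennreal_rpow_split {p : ℝ} (hp : 1 < p) (a : ℝ≥0∞) :
    a ^ p = a ^ (p - 1) * a := by
  rcases eq_or_ne a 0 with rfl | h0
  · simp [ENNReal.zero_rpow_of_pos (by linarith : (0:ℝ) < p)]
  rcases eq_or_ne a ⊤ with rfl | ht
  · rw [ENNReal.top_rpow_of_pos (by linarith), ENNReal.top_rpow_of_pos (by linarith),
      ENNReal.top_mul_top]
  · calc a ^ p = a ^ ((p - 1) + 1) := by ring_nf
    _ = a ^ (p - 1) * a ^ (1:ℝ) := ENNReal.rpow_add _ _ h0 ht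
    _ = a ^ (p - 1) * a := by rw [ENNReal.rpow_one]

private lemma iSup_min_natCast (a : ℝ≥0∞) : (⨆ n : ℕ, min a n) = a := by
  refine le_antisymm (iSup_le fun n => min_le_left _ _) ?_
  rcases eq_or_ne a ⊤ with rfl | ht
  · have : (⨆ n : ℕ, min (⊤:ℝ≥0∞) n) = ⨆ n : ℕ, (n:ℝ≥0∞) := by simp
    rw [this]
    by_contra h
    push_neg at h
    obtain ⟨n, hn⟩ := ENNReal.exists_nat_gt h.ne_top
    exact absurd (le_iSup (fun n : ℕ => (n:ℝ≥0∞)) n) (not_le.2 hn)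
  · obtain ⟨n, hn⟩ := ENNReal.exists_nat_gt ht
    calc a = min a n := (min_eq_left hn.le).symm
    _ ≤ ⨆ n : ℕ, min a n := le_iSup (fun n : ℕ => min a (n:ℝ≥0∞)) n

/-- Minkowski's integral inequality for `ℝ≥0∞`-valued functions. -/
private theorem lintegral_lintegral_rpow_le {α β : Type*} [MeasurableSpace α] [MeasurableSpace β]
    (μ : Measure α) (ν : Measure β) [SigmaFinite μ] [SigmaFinite ν]
    {p : ℝ} (hp : 1 ≤ p) (F : α × β → ℝ≥0∞) (hF : Measurable F) :
    (∫⁻ x, (∫⁻ t, F (x, t) ∂ν) ^ p ∂μ) ^ (1/p) ≤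
      ∫⁻ t, (∫⁻ x, F (x, t) ^ p ∂μ) ^ (1/p) ∂ν := by
  have hp0 : (0:ℝ) < p := by linarith
  set G : α → ℝ≥0∞ := fun x => ∫⁻ t, F (x, t) ∂ν with hGdef
  have hG : Measurable G := hF.lintegral_prod_right'
  rcases eq_or_lt_of_le hp with rfl | hp1
  · simp only [ENNReal.rpow_one, one_div_one]
    exact le_of_eq (lintegral_lintegral_swap hF.aemeasurable)
  set q : ℝ := Real.conjExponent p with hqdef
  have hpq : p.HolderConjugate q := Real.HolderConjugate.conjExponent hp1
  set I : ℝ≥0∞ := ∫⁻ t, (∫⁻ x, F (x, t) ^ p ∂μ) ^ (1/p) ∂ν with hIdef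
  set s : ℕ → Set α := spanningSets μ with hsdef
  set Gn : ℕ → α → ℝ≥0∞ := fun n => (s n).indicator (fun x => min (G x) n) with hGndef
  have hGnm : ∀ n, Measurable (Gn n) :=
    fun n => (hG.min measurable_const).indicator (measurableSet_spanningSets μ n)
  have hGn_le_G : ∀ n x, Gn n x ≤ G x := by
    intro n x
    classical
    simp only [hGndef, Set.indicator]
    split_ifs
    · exact min_le_left _ _
    · exact zero_le
  have hGn_le_n : ∀ n x, Gn n x ≤ n := by
    intro n x
    classical
    simp only [hGndef, Set.indicator]
    split_ifs
    · exact min_le_right _ _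
    · exact zero_le
  have hGn_mono : ∀ x, Monotone fun n => Gn n x := by
    intro x
    intro m n hmn
    classical
    simp only [hGndef, Set.indicator]
    split_ifs with h1 h2 h2
    · exact le_min (min_le_left _ _) ((min_le_right _ _).trans (by exact_mod_cast Nat.cast_le.2 hmn))
    · exact absurd (monotone_spanningSets μ hmn h1) h2
    · exact zero_le
    · exact le_rfl
  have hGn_sup : ∀ x, (⨆ n, Gn n x) = G x := by
    intro x
    have hx : x ∈ ⋃ n, s n := by rw [hsdef, iUnion_spanningSets]; trivial
    obtain ⟨n₀, hn₀⟩ := mem_iUnion.1 hx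
    refine le_antisymm (iSup_le fun n => hGn_le_G n x) ?_
    have key : ∀ m : ℕ, min (G x) m ≤ ⨆ n, Gn n x := by
      intro m
      have hmem : x ∈ s (max m n₀) := monotone_spanningSets μ (le_max_right _ _) hn₀
      have : min (G x) m ≤ Gn (max m n₀) x := by
        simp only [hGndef, Set.indicator_of_mem hmem]
        exact le_min (min_le_left _ _)
          ((min_le_right _ _).trans (by exact_mod_cast Nat.cast_le.2 (le_max_left _ _)))
      exact this.trans (le_iSup (fun n => Gn n x) (max m n₀))
    calc G x = ⨆ m : ℕ, min (G x) m := (iSup_min_natCast _).symm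
    _ ≤ ⨆ n, Gn n x := iSup_le key
  have hAfin : ∀ n, (∫⁻ x, Gn n x ^ p ∂μ) ≠ ⊤ := by
    intro n
    have hb : (∫⁻ x, Gn n x ^ p ∂μ) ≤ ∫⁻ x, (s n).indicator (fun _ => (n:ℝ≥0∞) ^ p) x ∂μ := by
      refine lintegral_mono fun x => ?_
      classical
      simp only [hGndef, Set.indicator]
      split_ifs
      · exact ENNReal.rpow_le_rpow (min_le_right _ _) hp0.le
      · simp [ENNReal.zero_rpow_of_pos hp0]
    rw [lintegral_indicator_const (measurableSet_spanningSets μ n)] at hb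
    exact ne_top_of_le_ne_top
      (ENNReal.mul_ne_top (ENNReal.rpow_ne_top_of_nonneg hp0.le (ENNReal.natCast_ne_top n))
        (measure_spanningSets_lt_top μ n).ne) hb
  have key : ∀ n, (∫⁻ x, Gn n x ^ p ∂μ) ≤ I ^ p := by
    intro n
    set A : ℝ≥0∞ := ∫⁻ x, Gn n x ^ p ∂μ with hAdef
    have hchain : A ≤ A ^ (1/q) * I := by
      have h1 : A = ∫⁻ x, Gn n x ^ (p - 1) * Gn n x ∂μ := by
        simp_rw [hAdef, ennreal_rpow_split hp1]
      have h2 : (∫⁻ x, Gn n x ^ (p - 1) * Gn n x ∂μ) ≤ ∫⁻ x, Gn n x ^ (p - 1) * G x ∂μ :=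
        lintegral_mono fun x => mul_le_mul_right (hGn_le_G n x) _
      have h3 : (∫⁻ x, Gn n x ^ (p - 1) * G x ∂μ)
          = ∫⁻ x, ∫⁻ t, Gn n x ^ (p - 1) * F (x, t) ∂ν ∂μ := by
        refine lintegral_congr fun x => ?_
        rw [hGdef, lintegral_const_mul' _ _ ?_]
        exact ENNReal.rpow_ne_top_of_nonneg (by linarith) (((hGn_le_n n x).trans_lt
          (ENNReal.natCast_lt_top n)).ne)
      have h4 : (∫⁻ x, ∫⁻ t, Gn n x ^ (p - 1) * F (x, t) ∂ν ∂μ)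
          = ∫⁻ t, ∫⁻ x, Gn n x ^ (p - 1) * F (x, t) ∂μ ∂ν := by
        refine lintegral_lintegral_swap ?_
        exact (((hGnm n).comp measurable_fst).pow_const _ |>.mul hF).aemeasurable
      have h5 : ∀ t, (∫⁻ x, Gn n x ^ (p - 1) * F (x, t) ∂μ)
          ≤ A ^ (1/q) * (∫⁻ x, F (x, t) ^ p ∂μ) ^ (1/p) := by
        intro t
        have hH := ENNReal.lintegral_mul_le_Lp_mul_Lq μ hpq.symm
          (f := fun x => Gn n x ^ (p - 1)) (g := fun x => F (x, t))
          ((hGnm n).pow_const _).aemeasurable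
          (hF.comp (measurable_id.prodMk measurable_const)).aemeasurable
        have hqA : (∫⁻ x, (Gn n x ^ (p - 1)) ^ q ∂μ) = A := by
          rw [hAdef]
          refine lintegral_congr fun x => ?_
          rw [← ENNReal.rpow_mul, hpq.sub_one_mul_conj]
        rwa [hqA] at hH
      calc A = ∫⁻ x, Gn n x ^ (p - 1) * Gn n x ∂μ := h1
      _ ≤ ∫⁻ x, Gn n x ^ (p - 1) * G x ∂μ := h2
      _ = ∫⁻ x, ∫⁻ t, Gn n x ^ (p - 1) * F (x, t) ∂ν ∂μ := h3
      _ = ∫⁻ t, ∫⁻ x, Gn n x ^ (p - 1) * F (x, t) ∂μ ∂ν := h4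
      _ ≤ ∫⁻ t, A ^ (1/q) * (∫⁻ x, F (x, t) ^ p ∂μ) ^ (1/p) ∂ν := lintegral_mono h5
      _ = A ^ (1/q) * I := lintegral_const_mul' _ _
          (ENNReal.rpow_ne_top_of_nonneg hpq.symm.one_div_nonneg (hAfin n))
    rcases eq_or_ne A 0 with hA0 | hA0
    · rw [hA0]; exact zero_le
    have hstep : A ^ (1/p) ≤ I := by
      have hd : A / A ^ (1/q) ≤ I := ENNReal.div_le_of_le_mul' hchain
      have heq : A ^ (1/p) = A / A ^ (1/q) := by
        have h1p : 1/p = 1 - 1/q := by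
          have := hpq.inv_add_inv_eq_one
          rw [one_div, one_div]; linarith
        rw [h1p, ENNReal.rpow_sub _ _ hA0 (hAfin n), ENNReal.rpow_one]
      rwa [heq]
    have := ENNReal.rpow_le_rpow hstep hp0.le
    rwa [← ENNReal.rpow_mul, one_div, inv_mul_cancel₀ hp0.ne', ENNReal.rpow_one] at this
  have hsup : (∫⁻ x, G x ^ p ∂μ) = ⨆ n, ∫⁻ x, Gn n x ^ p ∂μ := by
    rw [← lintegral_iSup (fun n => (hGnm n).pow_const _)
      (fun m k hmk x => ENNReal.rpow_le_rpow (hGn_mono x hmk) hp0.le)]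
    refine lintegral_congr fun x => ?_
    rw [← hGn_sup x]
    exact (ENNReal.orderIsoRpow p hp0).map_iSup (fun n => Gn n x)
  have hfin : (∫⁻ x, G x ^ p ∂μ) ≤ I ^ p := by
    rw [hsup]; exact iSup_le key
  calc (∫⁻ x, G x ^ p ∂μ) ^ (1/p) ≤ (I ^ p) ^ (1/p) :=
    ENNReal.rpow_le_rpow hfin (by positivity)
  _ = I := by rw [← ENNReal.rpow_mul, mul_one_div, div_self hp0.ne', ENNReal.rpow_one]

private lemma lintegral_comp_smul_addHaar {E : Type*} [NormedAddCommGroup E] [NormedSpace ℝ E]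
    [MeasurableSpace E] [BorelSpace E] [FiniteDimensional ℝ E]
    (μ : Measure E) [μ.IsAddHaarMeasure] {g : E → ℝ≥0∞} (hg : Measurable g)
    {r : ℝ} (hr : r ≠ 0) :
    ∫⁻ x, g (r • x) ∂μ = ENNReal.ofReal |(r ^ finrank ℝ E)⁻¹| * ∫⁻ x, g x ∂μ := by
  rw [← lintegral_map hg (measurable_const_smul r), Measure.map_addHaar_smul μ hr,
    lintegral_smul_measure, smul_eq_mul]

private lemma measurable_hdil {n : ℕ} (t : ℝ) : Measurable (hdil t : Heis n → Heis n) := by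
  apply Measurable.prod
  · exact measurable_pi_lambda _ fun i => show Measurable fun c : Heis n => t * c.1 i from by fun_prop
  · exact measurable_snd.const_mul (t ^ 2)

private lemma heis_lintegral_dil {n : ℕ} {g : Heis n → ℝ≥0∞} (hg : Measurable g)
    {t : ℝ} (ht : 0 < t) :
    ∫⁻ x, g (hdil t x) = ENNReal.ofReal ((t ^ (2 * n + 2))⁻¹) * ∫⁻ x, g x := by
  have ht2 : (t ^ 2 : ℝ) ≠ 0 := by positivity
  have H : Measurable fun v : Fin (2 * n) → ℝ => ∫⁻ s : ℝ, g (v, s) := hg.lintegral_prod_right'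
  calc ∫⁻ x, g (hdil t x)
      = ∫⁻ (v : Fin (2 * n) → ℝ), ∫⁻ (s : ℝ), g (hdil t (v, s)) ∂volume ∂volume := by
        rw [Measure.volume_eq_prod]
        exact lintegral_prod _ (hg.comp (measurable_hdil t)).aemeasurable
    _ = ∫⁻ (v : Fin (2 * n) → ℝ), ∫⁻ (s : ℝ), g (fun i => t * v i, (t ^ 2) • s) ∂volume ∂volume :=
        rfl
    _ = ∫⁻ (v : Fin (2 * n) → ℝ), ENNReal.ofReal |((t ^ 2) ^ finrank ℝ ℝ)⁻¹|
          * ∫⁻ s, g (fun i => t * v i, s) ∂volume ∂volume := by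
        refine lintegral_congr fun v => ?_
        exact lintegral_comp_smul_addHaar volume
          (hg.comp (measurable_const.prodMk measurable_id)) ht2
    _ = ENNReal.ofReal |((t ^ 2) ^ finrank ℝ ℝ)⁻¹|
          * ∫⁻ (v : Fin (2 * n) → ℝ), ∫⁻ (s : ℝ), g (fun i => t * v i, s) ∂volume ∂volume := by
        exact lintegral_const_mul' _ _ ENNReal.ofReal_ne_top
    _ = ENNReal.ofReal |((t ^ 2) ^ finrank ℝ ℝ)⁻¹|
          * ∫⁻ (v : Fin (2 * n) → ℝ), (fun w => ∫⁻ (s : ℝ), g (w, s) ∂volume) (t • v) ∂volume := rfl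
    _ = ENNReal.ofReal |((t ^ 2) ^ finrank ℝ ℝ)⁻¹|
          * (ENNReal.ofReal |(t ^ finrank ℝ (Fin (2 * n) → ℝ))⁻¹|
            * ∫⁻ (v : Fin (2 * n) → ℝ), ∫⁻ (s : ℝ), g (v, s) ∂volume ∂volume) := by
        rw [lintegral_comp_smul_addHaar volume H ht.ne']
    _ = ENNReal.ofReal ((t ^ (2 * n + 2))⁻¹) * ∫⁻ x, g x := by
        rw [Measure.volume_eq_prod, ← lintegral_prod _ hg.aemeasurable, ← mul_assoc,
          ← ENNReal.ofReal_mul (by positivity)]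
        congr 2
        rw [finrank_self, finrank_fintype_fun_eq_card, Fintype.card_fin,
          abs_of_pos (by positivity), abs_of_pos (by positivity), pow_one, ← mul_inv,
          ← pow_add]
        ring_nf

private lemma heis2_lintegral_dil {n₁ n₂ : ℕ} {G : Heis n₁ × Heis n₂ → ℝ≥0∞} (hG : Measurable G)
    {t₁ t₂ : ℝ} (h₁ : 0 < t₁) (h₂ : 0 < t₂) :
    ∫⁻ x : Heis n₁ × Heis n₂, G (hdil t₁ x.1, hdil t₂ x.2)
      = ENNReal.ofReal ((t₁ ^ (2 * n₁ + 2))⁻¹ * (t₂ ^ (2 * n₂ + 2))⁻¹) * ∫⁻ x, G x := by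
  have hD : Measurable fun x : Heis n₁ × Heis n₂ => ((hdil t₁ x.1 : Heis n₁), hdil t₂ x.2) :=
    ((measurable_hdil t₁).comp measurable_fst).prodMk ((measurable_hdil t₂).comp measurable_snd)
  have H : Measurable fun a : Heis n₁ => ∫⁻ b : Heis n₂, G (a, b) := hG.lintegral_prod_right'
  calc ∫⁻ x : Heis n₁ × Heis n₂, G (hdil t₁ x.1, hdil t₂ x.2)
      = ∫⁻ (a : Heis n₁), ∫⁻ (b : Heis n₂), G (hdil t₁ a, hdil t₂ b) ∂volume ∂volume := by
        rw [Measure.volume_eq_prod]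
        exact lintegral_prod _ (hG.comp hD).aemeasurable
    _ = ∫⁻ (a : Heis n₁), ENNReal.ofReal ((t₂ ^ (2 * n₂ + 2))⁻¹)
          * ∫⁻ (b : Heis n₂), G (hdil t₁ a, b) ∂volume ∂volume := by
        refine lintegral_congr fun a => ?_
        exact heis_lintegral_dil (hG.comp (measurable_const.prodMk measurable_id)) h₂
    _ = ENNReal.ofReal ((t₂ ^ (2 * n₂ + 2))⁻¹)
          * ∫⁻ (a : Heis n₁), (fun w => ∫⁻ (b : Heis n₂), G (w, b) ∂volume) (hdil t₁ a) ∂volume :=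
        lintegral_const_mul' _ _ ENNReal.ofReal_ne_top
    _ = ENNReal.ofReal ((t₂ ^ (2 * n₂ + 2))⁻¹) * (ENNReal.ofReal ((t₁ ^ (2 * n₁ + 2))⁻¹)
          * ∫⁻ (a : Heis n₁), ∫⁻ (b : Heis n₂), G (a, b) ∂volume ∂volume) := by
        rw [heis_lintegral_dil H h₁]
    _ = ENNReal.ofReal ((t₁ ^ (2 * n₁ + 2))⁻¹ * (t₂ ^ (2 * n₂ + 2))⁻¹) * ∫⁻ x, G x := by
        rw [Measure.volume_eq_prod, ← lintegral_prod _ hG.aemeasurable, ← mul_assoc,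
          ← ENNReal.ofReal_mul (by positivity)]
        ring_nf
        rfl

/-- Sufficiency for the product weighted Hardy operator on the Heisenberg group:
if `C = ∫₀¹∫₀¹ t₁^{-Q₁/p} t₂^{-Q₂/p} φ(t₁,t₂) dt₁ dt₂ < ∞`, then
`‖P_{φ,2} f‖_p ≤ C ‖f‖_p`. -/
theorem heis_weighted_hardy_upper (n₁ n₂ : ℕ) (p : ℝ) (hp : 1 ≤ p)
    (φ : ℝ × ℝ → ℝ) (hφm : Measurable φ) (hφ0 : ∀ t, 0 ≤ φ t)
    (hC : IntegrableOn
      (fun t : ℝ × ℝ => t.1 ^ (-((2 * n₁ + 2 : ℝ) / p)) * t.2 ^ (-((2 * n₂ + 2 : ℝ) / p)) * φ t)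
      (Icc 0 1 ×ˢ Icc 0 1))
    (f : Heis n₁ × Heis n₂ → ℝ) (hf : MemLp f (ENNReal.ofReal p) volume) :
    eLpNorm (fun x : Heis n₁ × Heis n₂ =>
        ∫ t in Icc (0:ℝ) 1 ×ˢ Icc (0:ℝ) 1, f (hdil t.1 x.1, hdil t.2 x.2) * φ t)
        (ENNReal.ofReal p) volume ≤
      ENNReal.ofReal (∫ t in Icc (0:ℝ) 1 ×ˢ Icc (0:ℝ) 1,
          t.1 ^ (-((2 * n₁ + 2 : ℝ) / p)) * t.2 ^ (-((2 * n₂ + 2 : ℝ) / p)) * φ t) *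
        eLpNorm f (ENNReal.ofReal p) volume := by
  classical
  have hp0 : (0:ℝ) < p := lt_of_lt_of_le zero_lt_one hp
  have hq0 : (ENNReal.ofReal p) ≠ 0 := by
    simp only [ne_eq, ENNReal.ofReal_eq_zero, not_le]; linarith
  have hqtop : (ENNReal.ofReal p) ≠ ⊤ := ENNReal.ofReal_ne_top
  have hqr : (ENNReal.ofReal p).toReal = p := ENNReal.toReal_ofReal hp0.le
  set S' : Set (ℝ × ℝ) := Ioc (0:ℝ) 1 ×ˢ Ioc (0:ℝ) 1 with hS'def
  have hS'm : MeasurableSet S' := measurableSet_Ioc.prod measurableSet_Ioc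
  -- replace the closed square by the half-open square
  have hres : (volume : Measure (ℝ × ℝ)).restrict (Icc (0:ℝ) 1 ×ˢ Icc (0:ℝ) 1)
      = volume.restrict S' := by
    apply Measure.restrict_congr_set
    rw [ae_eq_set]
    constructor
    · refine measure_mono_null (t := ({(0:ℝ)} : Set ℝ) ×ˢ (univ : Set ℝ)
        ∪ (univ : Set ℝ) ×ˢ ({(0:ℝ)} : Set ℝ)) ?_ ?_
      · rintro ⟨a, b⟩ ⟨⟨⟨ha0, ha1⟩, hb0, hb1⟩, hnot⟩
        simp only [hS'def, mem_prod, mem_Ioc] at hnot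
        rcases eq_or_lt_of_le ha0 with ha | ha
        · exact Or.inl ⟨by simpa using ha.symm, trivial⟩
        rcases eq_or_lt_of_le hb0 with hb | hb
        · exact Or.inr ⟨trivial, by simpa using hb.symm⟩
        · exact absurd ⟨⟨ha, ha1⟩, hb, hb1⟩ hnot
      · refine measure_union_null ?_ ?_ <;>
          rw [Measure.volume_eq_prod, Measure.prod_prod] <;> simp
    · have hsub : S' ⊆ Icc (0:ℝ) 1 ×ˢ Icc (0:ℝ) 1 :=
        prod_mono Ioc_subset_Icc_self Ioc_subset_Icc_self
      rw [diff_eq_empty.2 hsub]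
      exact measure_empty
  simp only [hres]
  rw [IntegrableOn, hres] at hC
  -- measurable representative of `f`
  obtain ⟨g, hgsm, hfg⟩ := hf.1
  have hg : Measurable g := hgsm.measurable
  rw [eLpNorm_congr_ae hfg]
  -- joint measurability
  have hDj : Measurable fun z : (Heis n₁ × Heis n₂) × (ℝ × ℝ) =>
      ((hdil z.2.1 z.1.1 : Heis n₁), (hdil z.2.2 z.1.2 : Heis n₂)) := by
    refine Measurable.prod (Measurable.prod ?_ ?_) (Measurable.prod ?_ ?_)
    · exact measurable_pi_lambda _ fun i =>
        (measurable_snd.fst).mul ((measurable_pi_apply i).comp measurable_fst.fst.fst)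
    · exact ((measurable_snd.fst).pow_const 2).mul measurable_fst.fst.snd
    · exact measurable_pi_lambda _ fun i =>
        (measurable_snd.snd).mul ((measurable_pi_apply i).comp measurable_fst.snd.fst)
    · exact ((measurable_snd.snd).pow_const 2).mul measurable_fst.snd.snd
  set F : (Heis n₁ × Heis n₂) × (ℝ × ℝ) → ℝ≥0∞ := fun z =>
    (‖g (hdil z.2.1 z.1.1, hdil z.2.2 z.1.2)‖₊ : ℝ≥0∞) * ENNReal.ofReal (φ z.2) with hFdef
  have hF : Measurable F :=
    ((hg.comp hDj).nnnorm.coe_nnreal_ennreal).mul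
      (ENNReal.measurable_ofReal.comp (hφm.comp measurable_snd))
  -- replace `f` by `g` inside the operator, almost everywhere
  have hnull : volume {y : Heis n₁ × Heis n₂ | f y ≠ g y} = 0 := ae_iff.1 hfg
  obtain ⟨N, hsubN, hNm, hN0⟩ := exists_measurable_superset_of_null hnull
  have hA0 : (volume.prod (volume.restrict S'))
      {z : (Heis n₁ × Heis n₂) × (ℝ × ℝ) | (hdil z.2.1 z.1.1, hdil z.2.2 z.1.2) ∈ N} = 0 := by
    have hAm : MeasurableSet {z : (Heis n₁ × Heis n₂) × (ℝ × ℝ) |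
        (hdil z.2.1 z.1.1, hdil z.2.2 z.1.2) ∈ N} := hDj hNm
    rw [Measure.prod_apply_symm hAm]
    have hz : ∀ᵐ t ∂(volume.restrict S' : Measure (ℝ × ℝ)),
        volume ((fun x : Heis n₁ × Heis n₂ => (x, t)) ⁻¹'
          {z : (Heis n₁ × Heis n₂) × (ℝ × ℝ) | (hdil z.2.1 z.1.1, hdil z.2.2 z.1.2) ∈ N}) = 0 := by
      filter_upwards [ae_restrict_mem hS'm] with t ht
      have h1 : 0 < t.1 := ht.1.1
      have h2 : 0 < t.2 := ht.2.1
      have hDm : Measurable fun x : Heis n₁ × Heis n₂ =>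
          ((hdil t.1 x.1 : Heis n₁), (hdil t.2 x.2 : Heis n₂)) :=
        ((measurable_hdil t.1).comp measurable_fst).prodMk
          ((measurable_hdil t.2).comp measurable_snd)
      have heq : ((fun x : Heis n₁ × Heis n₂ => (x, t)) ⁻¹'
            {z : (Heis n₁ × Heis n₂) × (ℝ × ℝ) | (hdil z.2.1 z.1.1, hdil z.2.2 z.1.2) ∈ N})
          = (fun x : Heis n₁ × Heis n₂ =>
              ((hdil t.1 x.1 : Heis n₁), (hdil t.2 x.2 : Heis n₂))) ⁻¹' N := rfl
      rw [heq]
      have hind : (fun x : Heis n₁ × Heis n₂ =>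
            N.indicator (fun _ => (1:ℝ≥0∞)) ((hdil t.1 x.1 : Heis n₁), hdil t.2 x.2))
          = ((fun x : Heis n₁ × Heis n₂ =>
              ((hdil t.1 x.1 : Heis n₁), (hdil t.2 x.2 : Heis n₂))) ⁻¹' N).indicator
            (fun _ => (1:ℝ≥0∞)) := by
        ext x
        by_cases hx : ((hdil t.1 x.1 : Heis n₁), (hdil t.2 x.2 : Heis n₂)) ∈ N <;>
          simp [Set.indicator_apply, hx, mem_preimage]
      have hscale := heis2_lintegral_dil (G := N.indicator fun _ => (1:ℝ≥0∞))
        (measurable_const.indicator hNm) h1 h2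
      rw [hind] at hscale
      rw [lintegral_indicator_const (hDm hNm), lintegral_indicator_const hNm, hN0] at hscale
      simpa using hscale
    rw [lintegral_congr_ae hz, lintegral_zero]
  have haeae : ∀ᵐ x ∂(volume : Measure (Heis n₁ × Heis n₂)),
      ∀ᵐ t ∂(volume.restrict S' : Measure (ℝ × ℝ)),
        f (hdil t.1 x.1, hdil t.2 x.2) = g (hdil t.1 x.1, hdil t.2 x.2) := by
    have h1 : ∀ᵐ z ∂(volume.prod (volume.restrict S') :
        Measure ((Heis n₁ × Heis n₂) × (ℝ × ℝ))),
        f (hdil z.2.1 z.1.1, hdil z.2.2 z.1.2) = g (hdil z.2.1 z.1.1, hdil z.2.2 z.1.2) := by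
      refine (measure_eq_zero_iff_ae_notMem.mp hA0).mono fun z hz => ?_
      by_contra hne
      exact hz (hsubN hne)
    exact Measure.ae_ae_of_ae_prod h1
  have hPae : (fun x : Heis n₁ × Heis n₂ =>
        ∫ t in S', f (hdil t.1 x.1, hdil t.2 x.2) * φ t)
      =ᵐ[volume] fun x => ∫ t in S', g (hdil t.1 x.1, hdil t.2 x.2) * φ t := by
    filter_upwards [haeae] with x hx
    exact integral_congr_ae (hx.mono fun t ht => by dsimp only; rw [ht])
  rw [eLpNorm_congr_ae hPae]
  rw [eLpNorm_eq_lintegral_rpow_enorm_toReal hq0 hqtop, eLpNorm_eq_lintegral_rpow_enorm_toReal hq0 hqtop, hqr]; simp only [enorm_eq_nnnorm]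
  set K : ℝ≥0∞ := (∫⁻ x, (‖g x‖₊ : ℝ≥0∞) ^ p ∂volume) ^ (1/p) with hKdef
  have hKne : K ≠ ⊤ := by
    have h2 := hf.2
    rw [eLpNorm_congr_ae hfg, eLpNorm_eq_lintegral_rpow_enorm_toReal hq0 hqtop, hqr] at h2
    exact h2.ne
  -- pointwise bound
  have hptw : ∀ x : Heis n₁ × Heis n₂,
      (‖∫ t in S', g (hdil t.1 x.1, hdil t.2 x.2) * φ t‖₊ : ℝ≥0∞)
        ≤ ∫⁻ t in S', F (x, t) := by
    intro x
    refine (enorm_integral_le_lintegral_enorm _).trans (le_of_eq ?_)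
    refine lintegral_congr fun t => ?_
    rw [hFdef]
    simp only [enorm_eq_nnnorm, nnnorm_mul, ENNReal.coe_mul]
    congr 1
    exact Real.enorm_eq_ofReal (hφ0 t)
  have hmink := lintegral_lintegral_rpow_le (volume : Measure (Heis n₁ × Heis n₂))
    (volume.restrict S') hp F hF
  have hle1 : (∫⁻ x : Heis n₁ × Heis n₂,
        (‖∫ t in S', g (hdil t.1 x.1, hdil t.2 x.2) * φ t‖₊ : ℝ≥0∞) ^ p ∂volume) ^ (1/p)
      ≤ ∫⁻ t in S', (∫⁻ x, F (x, t) ^ p ∂volume) ^ (1/p) := by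
    refine le_trans ?_ hmink
    refine ENNReal.rpow_le_rpow ?_ (by positivity)
    exact lintegral_mono fun x => ENNReal.rpow_le_rpow (hptw x) hp0.le
  -- evaluate the inner integral by scaling
  have hev : ∀ᵐ t ∂(volume.restrict S' : Measure (ℝ × ℝ)),
      (∫⁻ x, F (x, t) ^ p ∂volume) ^ (1/p)
        = ENNReal.ofReal (t.1 ^ (-((2 * n₁ + 2 : ℝ) / p)) * t.2 ^ (-((2 * n₂ + 2 : ℝ) / p)) * φ t)
            * K := by
    filter_upwards [ae_restrict_mem hS'm] with t ht
    have h1 : 0 < t.1 := ht.1.1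
    have h2 : 0 < t.2 := ht.2.1
    have hsplit : ∀ x : Heis n₁ × Heis n₂, F (x, t) ^ p
        = ENNReal.ofReal (φ t) ^ p * ((‖g (hdil t.1 x.1, hdil t.2 x.2)‖₊ : ℝ≥0∞) ^ p) := by
      intro x
      rw [hFdef]
      simp only []
      rw [ENNReal.mul_rpow_of_nonneg _ _ hp0.le, mul_comm]
    have hGm : Measurable fun y : Heis n₁ × Heis n₂ => (‖g y‖₊ : ℝ≥0∞) ^ p :=
      (hg.nnnorm.coe_nnreal_ennreal).pow_const _
    have hscale := heis2_lintegral_dil (G := fun y => (‖g y‖₊ : ℝ≥0∞) ^ p) hGm h1 h2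
    have hc : (((t.1 ^ (2*n₁+2))⁻¹ * (t.2 ^ (2*n₂+2))⁻¹ : ℝ)) ^ (1/p)
        = t.1 ^ (-((2 * n₁ + 2 : ℝ) / p)) * t.2 ^ (-((2 * n₂ + 2 : ℝ) / p)) := by
      rw [Real.mul_rpow (by positivity) (by positivity)]
      congr 1
      · rw [← Real.rpow_natCast t.1 (2*n₁+2), ← Real.rpow_neg h1.le, ← Real.rpow_mul h1.le]
        congr 1
        push_cast
        ring
      · rw [← Real.rpow_natCast t.2 (2*n₂+2), ← Real.rpow_neg h2.le, ← Real.rpow_mul h2.le]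
        congr 1
        push_cast
        ring
    calc (∫⁻ x, F (x, t) ^ p ∂volume) ^ (1/p)
        = (ENNReal.ofReal (φ t) ^ p
            * ∫⁻ x : Heis n₁ × Heis n₂,
              (‖g (hdil t.1 x.1, hdil t.2 x.2)‖₊ : ℝ≥0∞) ^ p ∂volume) ^ (1/p) := by
          rw [← lintegral_const_mul' _ _
            (ENNReal.rpow_ne_top_of_nonneg hp0.le ENNReal.ofReal_ne_top)]
          exact congrArg (· ^ (1/p)) (lintegral_congr hsplit)
      _ = (ENNReal.ofReal (φ t) ^ p * (ENNReal.ofReal ((t.1 ^ (2*n₁+2))⁻¹ * (t.2 ^ (2*n₂+2))⁻¹)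
            * ∫⁻ y : Heis n₁ × Heis n₂, (‖g y‖₊ : ℝ≥0∞) ^ p ∂volume)) ^ (1/p) := by rw [hscale]
      _ = ENNReal.ofReal (φ t)
            * (ENNReal.ofReal ((t.1 ^ (2*n₁+2))⁻¹ * (t.2 ^ (2*n₂+2))⁻¹)) ^ (1/p) * K := by
          rw [ENNReal.mul_rpow_of_nonneg _ _ (by positivity),
            ENNReal.mul_rpow_of_nonneg _ _ (by positivity),
            ← ENNReal.rpow_mul, mul_one_div, div_self hp0.ne', ENNReal.rpow_one, hKdef, mul_assoc]
      _ = ENNReal.ofReal (t.1 ^ (-((2 * n₁ + 2 : ℝ) / p)) * t.2 ^ (-((2 * n₂ + 2 : ℝ) / p)) * φ t)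
            * K := by
          rw [ENNReal.ofReal_rpow_of_pos (by positivity), hc,
            ← ENNReal.ofReal_mul (hφ0 t)]
          congr 2
          ring
  have hnn : 0 ≤ᵐ[(volume.restrict S' : Measure (ℝ × ℝ))]
      fun t : ℝ × ℝ => t.1 ^ (-((2 * n₁ + 2 : ℝ) / p)) * t.2 ^ (-((2 * n₂ + 2 : ℝ) / p)) * φ t := by
    filter_upwards [ae_restrict_mem hS'm] with t ht
    exact mul_nonneg (mul_nonneg (Real.rpow_nonneg ht.1.1.le _)
      (Real.rpow_nonneg ht.2.1.le _)) (hφ0 t)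
  have hle2 : (∫⁻ t in S', (∫⁻ x, F (x, t) ^ p ∂volume) ^ (1/p))
      = ENNReal.ofReal (∫ t in S',
          t.1 ^ (-((2 * n₁ + 2 : ℝ) / p)) * t.2 ^ (-((2 * n₂ + 2 : ℝ) / p)) * φ t) * K := by
    rw [lintegral_congr_ae hev, lintegral_mul_const' _ _ hKne,
      ofReal_integral_eq_lintegral_ofReal hC hnn]
  exact hle1.trans (le_of_eq hle2)
end
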